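/- Let F denote the initial Fitting ideal of the ℤ[G]-module 𝓘_I/g̃𝓘_I, i.e. the ideal of ℤ[G] generated by the s×s minors of the presentation matrix of 𝓘_I/g̃𝓘_I on the generators τ_1,…,τ_s obtained from M_s(ν_1,…,ν_s,τ_1,…,τ_s) by appending the s rows g̃·e_l (1 ≤ l ≤ s). Then one has the equality of ideals of ℤ[G]: (#I − ν_I·φ̃^{-1} + #I·ν_I) · F = g̃ · ( #I·ν_I·ℤ[G] + (#I − ν_I·φ̃^{-1})·𝓙 ). (This is Theorem 1.3 of the paper, h·SFitt¹_{ℤ[G]}(A) = (ν_I, (1 − (ν_I/#I)φ^{-1})𝓙) for A = ℤ[G/I]/(g) and h = 1 − (ν_I/#I)φ̃^{-1} + ν_I ∈ ℚ[G], with denominators cleared using SFitt¹_{ℤ[G]}(A) = g̃^{-1}·F.) -/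

import Mathlib

open MonoidAlgebra Finset

/-- The sum `ν_H = Σ_{σ ∈ H} σ` of the elements of a subgroup `H` in the group algebra. -/
noncomputable def nuElt (R : Type) [CommRing R] {G : Type} [CommGroup G] [Fintype G]
    (H : Subgroup G) : MonoidAlgebra R G :=
  letI := Classical.decPred (· ∈ H)
  ∑ σ ∈ Finset.univ.filter (· ∈ H), MonoidAlgebra.of R G σ

/-- `Fitt_i(A)`: the ideal generated by the `(n-i) × (n-i)` minors of a matrix `A`
with `n` columns (so `Fitt_i(A) = (1)` for `i ≥ n`, and `(0)` if `A` has fewer than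
`n - i` rows). -/
noncomputable def fittMat {R : Type} [CommRing R] {m n : Type} [Fintype m] [Fintype n]
    (A : Matrix m n R) (i : ℕ) : Ideal R :=
  Ideal.span {x : R |
    ∃ (r : Fin (Fintype.card n - i) → m) (c : Fin (Fintype.card n - i) → n),
      x = (A.submatrix r c).det}

/-- The index type for the rows of `N_s`: pairs `l < l'`. -/
abbrev rowPairs (s : ℕ) := {p : Fin s × Fin s // p.1 < p.2}

/-- The matrix `N_s(t_1, …, t_s)`: row `(l, l')` has `-t_{l'}` in column `l`,
`t_l` in column `l'`, and `0` elsewhere. -/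
noncomputable def Nmat {R : Type} [CommRing R] {s : ℕ} (t : Fin s → R) :
    Matrix (rowPairs s) (Fin s) R :=
  fun p l => if l = p.val.1 then -t p.val.2 else if l = p.val.2 then t p.val.1 else 0

/-- The matrix `M_s(ν_1, …, ν_s, τ_1, …, τ_s)`: `N_s(τ_1, …, τ_s)` with `s` extra rows
appended, the `l`-th of which has `ν_l` in column `l` and `0` elsewhere. -/
noncomputable def Mmat {R : Type} [CommRing R] {s : ℕ} (ν t : Fin s → R) :
    Matrix (Fin s ⊕ rowPairs s) (Fin s) R :=
  Sum.elim (fun l l' => if l' = l then ν l else 0) (Nmat t)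

/-- `I = I_1 × ⋯ × I_s` where `I_l` is the (possibly trivial) cyclic subgroup generated
by `σ l`: every element of `I` is, in a unique way, the product of elements of the
subgroups `⟨σ l⟩`. -/
def IsDecomp {G : Type} [CommGroup G] (I : Subgroup G) {s : ℕ} (σ : Fin s → G) : Prop :=
  (∀ l, σ l ∈ I) ∧
    ∀ g ∈ I, ∃! x : ∀ l, Subgroup.zpowers (σ l), (∏ l, ((x l : G))) = g

/-- The ideal `Z_i` generated by the products `ν_{l_1} ⋯ ν_{l_{s-i}}` over all
`(s-i)`-element subsets `{l_1 < ⋯ < l_{s-i}}` of `{1, …, s}`. -/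
noncomputable def Zideal {G : Type} [CommGroup G] [Fintype G] {s : ℕ} (σ : Fin s → G)
    (i : ℕ) : Ideal (MonoidAlgebra ℤ G) :=
  Ideal.span {x | ∃ T : Finset (Fin s), T.card = s - i ∧
    x = ∏ l ∈ T, nuElt ℤ (Subgroup.zpowers (σ l))}

/-- The augmentation-type kernel ideal `𝓘_H = ker(ℤ[G] → ℤ[G/H])`. -/
noncomputable def kerIdeal {G : Type} [CommGroup G] [Fintype G] (H : Subgroup G) :
    Ideal (MonoidAlgebra ℤ G) :=
  RingHom.ker (MonoidAlgebra.mapDomainRingHom ℤ (QuotientGroup.mk' H))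

-- ============ Part 1: generic nuElt / kernel lemmas ============
attribute [local instance] Classical.propDecidable

set_option linter.unusedSectionVars false

section Part1
variable {G : Type} [CommGroup G] [Fintype G]

lemma nuElt_eq (H : Subgroup G) : nuElt ℤ H = ∑ h : H, MonoidAlgebra.of ℤ G (h : G) := by
  rw [nuElt]
  rw [← Finset.sum_subtype (p := (· ∈ H)) (univ.filter (· ∈ H)) (by simp)]

lemma nuElt_mul_of {H : Subgroup G} {h : G} (hh : h ∈ H) :
    nuElt ℤ H * MonoidAlgebra.of ℤ G h = nuElt ℤ H := by
  rw [nuElt_eq, Finset.sum_mul]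
  rw [← Equiv.sum_comp (Equiv.mulRight (⟨h, hh⟩ : H)) (fun x : H => MonoidAlgebra.of ℤ G (x : G))]
  refine Finset.sum_congr rfl fun x _ => ?_
  simp [MonoidAlgebra.of_apply, MonoidAlgebra.single_mul_single]

lemma nuElt_mul_nuElt {H H' : Subgroup G} (hle : H' ≤ H) :
    nuElt ℤ H * nuElt ℤ H' = (Nat.card H' : MonoidAlgebra ℤ G) * nuElt ℤ H := by
  rw [nuElt_eq H', Finset.mul_sum]
  rw [Finset.sum_congr rfl (fun (x : H') _ => nuElt_mul_of (hle x.2))]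
  simp [Nat.card_eq_fintype_card, mul_comm]

lemma sub_one_mul_nuElt {H : Subgroup G} {h : G} (hh : h ∈ H) :
    (MonoidAlgebra.of ℤ G h - 1) * nuElt ℤ H = 0 := by
  rw [sub_mul, one_mul, mul_comm, nuElt_mul_of hh, sub_self]

/-- The subgroup of elements `x` with `of x - 1 ∈ J`. -/
def augSG (J : Ideal (MonoidAlgebra ℤ G)) : Subgroup G where
  carrier := {x | MonoidAlgebra.of ℤ G x - 1 ∈ J}
  one_mem' := by simp [MonoidAlgebra.one_def]
  mul_mem' := by
    intro a b ha hb
    have h : MonoidAlgebra.of ℤ G (a * b) - 1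
        = MonoidAlgebra.of ℤ G a * (MonoidAlgebra.of ℤ G b - 1) + (MonoidAlgebra.of ℤ G a - 1) := by
      rw [map_mul]; ring
    show MonoidAlgebra.of ℤ G (a * b) - 1 ∈ J
    rw [h]
    exact add_mem (Ideal.mul_mem_left _ _ hb) ha
  inv_mem' := by
    intro a ha
    have h : MonoidAlgebra.of ℤ G a⁻¹ - 1
        = -(MonoidAlgebra.of ℤ G a⁻¹ * (MonoidAlgebra.of ℤ G a - 1)) := by
      have h2 : MonoidAlgebra.of ℤ G a⁻¹ * MonoidAlgebra.of ℤ G a = 1 := by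
        rw [← map_mul]; simp [MonoidAlgebra.one_def]
      rw [mul_sub, h2, mul_one]; ring
    show MonoidAlgebra.of ℤ G a⁻¹ - 1 ∈ J
    rw [h]
    exact neg_mem (Ideal.mul_mem_left _ _ ha)

lemma ker_le_of_le_augSG {H : Subgroup G} {J : Ideal (MonoidAlgebra ℤ G)}
    (hle : (H : Set G) ⊆ augSG J) : kerIdeal H ≤ J := by
  intro f hf
  set π : G → G := fun g => Quotient.out (QuotientGroup.mk (s := H) g) with hπdef
  have hmem : ∀ g : G, (π g)⁻¹ * g ∈ H := by
    intro g
    rw [← QuotientGroup.eq]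
    exact Quotient.out_eq _
  set P : MonoidAlgebra ℤ G → Prop := fun x => x ∈ J with hP
  have hπ : ∀ a : G, P (MonoidAlgebra.single a 1 - MonoidAlgebra.single (π a) 1) := by
    intro a
    show (MonoidAlgebra.of ℤ G a - MonoidAlgebra.of ℤ G (π a) : MonoidAlgebra ℤ G) ∈ J
    have heq : (MonoidAlgebra.of ℤ G a - MonoidAlgebra.of ℤ G (π a) : MonoidAlgebra ℤ G)
        = (MonoidAlgebra.of ℤ G (π a)) * (MonoidAlgebra.of ℤ G ((π a)⁻¹ * a) - 1) := by
      rw [mul_sub, mul_one, ← map_mul, mul_inv_cancel_left]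
    rw [heq]
    exact Ideal.mul_mem_left _ _ (hle (hmem a))
  have key : ∀ f : MonoidAlgebra ℤ G, P (f - MonoidAlgebra.mapDomain π f) := by
    intro f
    induction f using MonoidAlgebra.induction_linear with
    | zero => simpa [hP, MonoidAlgebra.mapDomain_zero] using (zero_mem J)
    | add f g hfm hgm =>
        rw [MonoidAlgebra.mapDomain_add]
        have h3 : f + g - (MonoidAlgebra.mapDomain π f + MonoidAlgebra.mapDomain π g)
          = (f - MonoidAlgebra.mapDomain π f) + (g - MonoidAlgebra.mapDomain π g) := by abel
        rw [h3]
        exact add_mem hfm hgm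
    | single a b =>
        rw [MonoidAlgebra.mapDomain_single]
        have h4 : (MonoidAlgebra.single a b - MonoidAlgebra.single (π a) b : MonoidAlgebra ℤ G)
            = (MonoidAlgebra.single a 1 - MonoidAlgebra.single (π a) 1 : MonoidAlgebra ℤ G)
              * MonoidAlgebra.single 1 b := by
          rw [sub_mul, MonoidAlgebra.single_mul_single, MonoidAlgebra.single_mul_single]
          simp
        rw [h4]
        exact Ideal.mul_mem_right _ _ (hπ a)
  have hzero : MonoidAlgebra.mapDomain π f = 0 := by
    have hf0 : MonoidAlgebra.mapDomain (QuotientGroup.mk (s := H)) f = 0 := hf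
    have hc : MonoidAlgebra.mapDomain π f = MonoidAlgebra.mapDomain (Quotient.out : G ⧸ H → G)
        (MonoidAlgebra.mapDomain (QuotientGroup.mk (s := H)) f) := by
      simp only [MonoidAlgebra.mapDomain, MonoidAlgebra.coeff_ofCoeff, ← Finsupp.mapDomain_comp]
      rfl
    rw [hc, hf0, MonoidAlgebra.mapDomain_zero]
  have hfinal := key f
  rw [hzero, sub_zero] at hfinal
  exact hfinal

lemma of_sub_one_mem_ker {H : Subgroup G} {h : G} (hh : h ∈ H) :
    MonoidAlgebra.of ℤ G h - 1 ∈ kerIdeal H := by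
  show _ ∈ RingHom.ker _
  rw [RingHom.mem_ker, map_sub, map_one]
  have : (MonoidAlgebra.mapDomainRingHom ℤ (QuotientGroup.mk' H)) (MonoidAlgebra.of ℤ G h)
      = MonoidAlgebra.of ℤ (G ⧸ H) (QuotientGroup.mk' H h) := by
    simp [MonoidAlgebra.of_apply, MonoidAlgebra.mapDomainRingHom_apply, Finsupp.mapDomain_single]
  rw [this]
  have h1 : QuotientGroup.mk' H h = 1 := by
    simpa using (QuotientGroup.eq_one_iff h).2 hh
  rw [h1]
  simp [MonoidAlgebra.one_def]

end Part1

-- ============ Part 2: decomposition ============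
section Part2
variable {G : Type} [CommGroup G] [Fintype G] {I : Subgroup G} {s : ℕ} {σ : Fin s → G}

noncomputable def decompEquiv (hdec : IsDecomp I σ) : (∀ l, Subgroup.zpowers (σ l)) ≃ I :=
  Equiv.ofBijective
    (fun x => ⟨∏ l, ((x l : G)), prod_mem (fun l _ =>
      (Subgroup.zpowers_le.2 (hdec.1 l)) (x l).2)⟩)
    (by
      constructor
      · intro x y hxy
        have hx := hdec.2 (∏ l, ((y l : G))) (prod_mem (fun l _ =>
            (Subgroup.zpowers_le.2 (hdec.1 l)) (y l).2))
        obtain ⟨z, _, hz⟩ := hx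
        have h1 : x = z := hz x (by simpa using congrArg Subtype.val hxy)
        have h2 : y = z := hz y rfl
        rw [h1, h2]
      · intro g
        obtain ⟨x, hx, _⟩ := hdec.2 (g : G) g.2
        exact ⟨x, Subtype.ext hx⟩)

lemma nu_prod (hdec : IsDecomp I σ) :
    nuElt ℤ I = ∏ l, nuElt ℤ (Subgroup.zpowers (σ l)) := by
  have h1 : ∀ l, nuElt ℤ (Subgroup.zpowers (σ l))
      = ∑ h : Subgroup.zpowers (σ l), MonoidAlgebra.of ℤ G (h : G) := fun l => nuElt_eq _
  rw [nuElt_eq, Finset.prod_congr rfl (fun l _ => h1 l)]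
  rw [Finset.prod_univ_sum]
  rw [← Equiv.sum_comp (decompEquiv hdec) (fun h : I => MonoidAlgebra.of ℤ G (h : G))]
  refine Finset.sum_congr rfl fun x _ => ?_
  simp only [decompEquiv, Equiv.ofBijective_apply]
  rw [← map_prod]
  rfl

lemma card_prod (hdec : IsDecomp I σ) :
    (Nat.card I : ℕ) = ∏ l, Nat.card (Subgroup.zpowers (σ l)) := by
  rw [Nat.card_congr (decompEquiv hdec).symm]
  rw [Nat.card_pi]

lemma I_le_augSG (hdec : IsDecomp I σ) {J : Ideal (MonoidAlgebra ℤ G)}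
    (hJ : ∀ l, MonoidAlgebra.of ℤ G (σ l) - 1 ∈ J) : (I : Set G) ⊆ augSG J := by
  intro g hg
  obtain ⟨x, hx, _⟩ := hdec.2 g hg
  rw [← hx]
  exact prod_mem (fun l _ => (Subgroup.zpowers_le.2 (hJ l : σ l ∈ augSG J)) (x l).2)

/-- `ε = #I - ν_I` lies in the span of the `τ_l`. -/
lemma eps_mem_span (hdec : IsDecomp I σ) :
    (Nat.card I : MonoidAlgebra ℤ G) - nuElt ℤ I
      ∈ Ideal.span {x | ∃ l, x = MonoidAlgebra.of ℤ G (σ l) - 1} := by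
  set J := Ideal.span {x : MonoidAlgebra ℤ G | ∃ l, x = MonoidAlgebra.of ℤ G (σ l) - 1}
  have hJ : ∀ l, MonoidAlgebra.of ℤ G (σ l) - 1 ∈ J :=
    fun l => Ideal.subset_span ⟨l, rfl⟩
  have hIle := I_le_augSG hdec hJ
  have hcard : (Nat.card I : MonoidAlgebra ℤ G) = ∑ _h : I, (1 : MonoidAlgebra ℤ G) := by
    simp [Nat.card_eq_fintype_card]
  rw [hcard, nuElt_eq, ← Finset.sum_sub_distrib]
  refine sum_mem (fun h _ => ?_)
  have : (1 : MonoidAlgebra ℤ G) - MonoidAlgebra.of ℤ G (h : G)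
      = -(MonoidAlgebra.of ℤ G (h : G) - 1) := by ring
  rw [this]
  exact neg_mem (hIle h.2)

end Part2
-- ============ Part 3: matrix abbreviations, Cramer, vanishing ============
section Part3
variable {G : Type} [CommGroup G] [Fintype G]

/-- generic Cramer-type vanishing: a linear relation among the columns kills the det. -/
lemma mul_det_eq_zero_of_col_rel {A : Type} [CommRing A] {n : Type} [Fintype n] [DecidableEq n]
    (S : Matrix n n A) (x : n → A) (h : ∀ i, ∑ j, x j * S i j = 0) (j0 : n) :
    x j0 * S.det = 0 := by
  have h1 := Matrix.det_updateCol_sum S j0 x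
  have h2 : (fun k => ∑ i, x i • S k i) = fun _ => (0 : A) := by
    funext k
    simpa [smul_eq_mul] using h k
  rw [h2] at h1
  have h3 : (S.updateCol j0 fun _ => (0 : A)).det = 0 := by
    refine Matrix.det_eq_zero_of_column_eq_zero j0 ?_
    intro i
    simp [Matrix.updateCol_self]
  rw [h3] at h1
  simpa using h1.symm

variable (I : Subgroup G) {s : ℕ} (σ : Fin s → G) (φt : G)

noncomputable def nuL (l : Fin s) : MonoidAlgebra ℤ G := nuElt ℤ (Subgroup.zpowers (σ l))
noncomputable def tauL (l : Fin s) : MonoidAlgebra ℤ G := MonoidAlgebra.of ℤ G (σ l) - 1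
noncomputable def gtE : MonoidAlgebra ℤ G :=
  1 - MonoidAlgebra.of ℤ G φt⁻¹ + (Nat.card I : MonoidAlgebra ℤ G)
noncomputable def bigMat : Matrix ((Fin s ⊕ rowPairs s) ⊕ Fin s) (Fin s) (MonoidAlgebra ℤ G) :=
  Sum.elim (Mmat (nuL σ) (tauL σ))
    (fun l l' => if l' = l then gtE I φt else 0)

lemma tauL_mul_nuL (l : Fin s) : tauL σ l * nuL σ l = 0 :=
  sub_one_mul_nuElt (Subgroup.mem_zpowers _)

lemma nuI_mul_tauL {I : Subgroup G} (hdec : IsDecomp I σ) (l : Fin s) :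
    nuElt ℤ I * tauL σ l = 0 := by
  rw [mul_comm]; exact sub_one_mul_nuElt (hdec.1 l)

lemma nuI_mul_nuL {I : Subgroup G} (hdec : IsDecomp I σ) (l : Fin s) :
    nuElt ℤ I * nuL σ l
      = (Nat.card (Subgroup.zpowers (σ l)) : MonoidAlgebra ℤ G) * nuElt ℤ I :=
  nuElt_mul_nuElt (Subgroup.zpowers_le.2 (hdec.1 l))

lemma nuI_sq (I : Subgroup G) :
    nuElt ℤ I * nuElt ℤ I = (Nat.card I : MonoidAlgebra ℤ G) * nuElt ℤ I :=
  nuElt_mul_nuElt le_rfl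

lemma Nmat_row_eq (p : rowPairs s) (j : Fin s) :
    Nmat (tauL σ) p j = (if j = p.val.1 then -tauL σ p.val.2 else 0)
      + (if j = p.val.2 then tauL σ p.val.1 else 0) := by
  rcases p with ⟨⟨p1, p2⟩, hp⟩
  have hne : p1 ≠ p2 := ne_of_lt hp
  by_cases h1 : j = p1
  · subst h1
    simp [Nmat, hne]
  · by_cases h2 : j = p2
    · subst h2
      simp [Nmat, h1]
    · simp [Nmat, h1, h2]

/-- Case 3 key: if the chosen rows avoid the `g̃` rows and the columns are all of `Fin s`,
then each `τ` kills the determinant. -/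
lemma tauL_mul_det_eq_zero (r : Fin s → (Fin s ⊕ rowPairs s) ⊕ Fin s)
    (hng : ∀ i l, r i ≠ Sum.inr l) (c : Fin s → Fin s) (hc : Function.Bijective c) (l0 : Fin s) :
    tauL σ l0 * ((bigMat I σ φt).submatrix r c).det = 0 := by
  obtain ⟨k0, hk0⟩ := hc.2 l0
  have main := mul_det_eq_zero_of_col_rel ((bigMat I σ φt).submatrix r c)
    (fun k => tauL σ (c k)) ?_ k0
  · rwa [hk0] at main
  intro i
  have hre : ∑ k, tauL σ (c k) * (bigMat I σ φt).submatrix r c i k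
      = ∑ j, tauL σ j * (bigMat I σ φt) (r i) j := by
    rw [← Function.Bijective.sum_comp hc (fun j => tauL σ j * (bigMat I σ φt) (r i) j)]
    rfl
  rw [hre]
  rcases hri : r i with (rl | rl)
  · rcases rl with (l | p)
    · have : ∀ j, (bigMat I σ φt) (Sum.inl (Sum.inl l)) j
          = if j = l then nuL σ l else 0 := by
        intro j; rfl
      simp only [this, mul_ite, mul_zero]
      rw [Finset.sum_ite_eq' univ l (fun j => tauL σ j * nuL σ l)]
      simp [tauL_mul_nuL]
    · have hNe : ∀ j, (bigMat I σ φt) (Sum.inl (Sum.inr p)) j = Nmat (tauL σ) p j := by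
        intro j; rfl
      simp only [hNe, Nmat_row_eq]
      rw [Finset.sum_congr rfl (fun j _ => mul_add (tauL σ j) _ _)]
      rw [Finset.sum_add_distrib]
      simp only [mul_ite, mul_zero]
      rw [Finset.sum_ite_eq' univ p.val.1, Finset.sum_ite_eq' univ p.val.2]
      simp only [Finset.mem_univ, if_true]
      ring
  · exact absurd hri (hng i rl)

/-- If an edge row is used, `ν_I` kills the determinant. -/
lemma nuI_mul_det_eq_zero {I : Subgroup G} (hdec : IsDecomp I σ)
    (r : Fin s → (Fin s ⊕ rowPairs s) ⊕ Fin s) (c : Fin s → Fin s)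
    {i0 : Fin s} {p : rowPairs s} (hi0 : r i0 = Sum.inl (Sum.inr p)) :
    nuElt ℤ I * ((bigMat I σ φt).submatrix r c).det = 0 := by
  set S := (bigMat I σ φt).submatrix r c with hS
  have h1 : nuElt ℤ I * S.det = (S.updateRow i0 (nuElt ℤ I • S i0)).det := by
    rw [Matrix.det_updateRow_smul, Matrix.updateRow_eq_self]
  rw [h1]
  refine Matrix.det_eq_zero_of_row_eq_zero i0 ?_
  intro j
  rw [Matrix.updateRow_self]
  have h2 : S i0 j = Nmat (tauL σ) p (c j) := by
    rw [hS, Matrix.submatrix_apply, hi0]; rfl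
  simp only [Pi.smul_apply, smul_eq_mul, h2, Nmat_row_eq]
  rw [mul_add]
  have hz : ∀ w : Fin s, nuElt ℤ I * tauL σ w = 0 := nuI_mul_tauL σ hdec
  by_cases ha : c j = p.val.1 <;> by_cases hb : c j = p.val.2 <;>
    simp [ha, hb, hz, mul_neg]
end Part3
-- ============ Part 4: ideal bookkeeping ============
section Part4
variable {G : Type} [CommGroup G] [Fintype G]

noncomputable def Jideal (D : Subgroup G) {s : ℕ} (σ : Fin s → G) : Ideal (MonoidAlgebra ℤ G) :=
  ∑ i ∈ Finset.range s, Zideal σ (i + 1) * (kerIdeal D) ^ i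

lemma le_jideal (D : Subgroup G) {s : ℕ} (σ : Fin s → G) {i0 : ℕ} (hi0 : i0 < s) :
    Zideal σ (i0 + 1) * (kerIdeal D) ^ i0 ≤ Jideal D σ := by
  rw [Jideal, ← Finset.add_sum_erase _ _ (Finset.mem_range.2 hi0), Submodule.add_eq_sup]
  exact le_sup_left

lemma claimJ (D : Subgroup G) {s : ℕ} (σ : Fin s → G) (A : Finset (Fin s))
    (hA : A.card + 1 ≤ s) {e : ℕ} (he : s - 1 - A.card ≤ e)
    {x : MonoidAlgebra ℤ G} (hx : x ∈ (kerIdeal D) ^ e) :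
    (∏ l ∈ A, nuL σ l) * x ∈ Jideal D σ := by
  have h1 : (∏ l ∈ A, nuL σ l) ∈ Zideal σ ((s - 1 - A.card) + 1) := by
    refine Ideal.subset_span ⟨A, ?_, rfl⟩
    omega
  have h2 : x ∈ (kerIdeal D) ^ (s - 1 - A.card) := Ideal.pow_le_pow_right he hx
  exact le_jideal D σ (by omega) (Ideal.mul_mem_mul h1 h2)

lemma nu_mem_J {I D : Subgroup G} {s : ℕ} {σ : Fin s → G} (hdec : IsDecomp I σ)
    (hs : 1 ≤ s) : nuElt ℤ I ∈ Jideal D σ := by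
  have l0 : Fin s := ⟨0, by omega⟩
  have h1 : nuElt ℤ I = (∏ l ∈ Finset.univ.erase l0, nuL σ l) * nuL σ l0 := by
    rw [nu_prod hdec, ← Finset.prod_erase_mul Finset.univ _ (Finset.mem_univ l0)]
    rfl
  have h2 : (∏ l ∈ Finset.univ.erase l0, nuL σ l) ∈ Zideal σ 1 := by
    refine Ideal.subset_span ⟨Finset.univ.erase l0, ?_, rfl⟩
    rw [Finset.card_erase_of_mem (Finset.mem_univ l0), Finset.card_univ, Fintype.card_fin]
  have h3 : nuElt ℤ I ∈ Zideal σ 1 := by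
    rw [h1]; exact Ideal.mul_mem_right _ _ h2
  have h4 := le_jideal D σ (by omega : 0 < s)
  rw [pow_zero, mul_one] at h4
  exact h4 h3
end Part4
-- ============ Part 5: membership of generators in kerIdeal, Ymem ============
section Part5
variable {G : Type} [CommGroup G] [Fintype G]

lemma delta_mem {D : Subgroup G} {φt : G} (hφt : φt ∈ D) :
    1 - MonoidAlgebra.of ℤ G φt⁻¹ ∈ kerIdeal D := by
  have h := of_sub_one_mem_ker (inv_mem hφt : φt⁻¹ ∈ D)
  have : (1 : MonoidAlgebra ℤ G) - MonoidAlgebra.of ℤ G φt⁻¹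
      = -(MonoidAlgebra.of ℤ G φt⁻¹ - 1) := by ring
  rw [this]; exact neg_mem h

lemma tau_mem_ker {I D : Subgroup G} {s : ℕ} {σ : Fin s → G} (hdec : IsDecomp I σ)
    (hID : I ≤ D) (l : Fin s) : tauL σ l ∈ kerIdeal D :=
  of_sub_one_mem_ker (hID (hdec.1 l))

lemma eps_mem_ker {I D : Subgroup G} {s : ℕ} {σ : Fin s → G} (hdec : IsDecomp I σ)
    (hID : I ≤ D) : (Nat.card I : MonoidAlgebra ℤ G) - nuElt ℤ I ∈ kerIdeal D := by
  have h := eps_mem_span hdec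
  refine Ideal.span_le.2 ?_ h
  rintro x ⟨l, rfl⟩
  exact tau_mem_ker hdec hID l

lemma prod_mem_pow {ι : Type*} (K : Ideal (MonoidAlgebra ℤ G)) (t : Finset ι)
    (f : ι → MonoidAlgebra ℤ G) (hf : ∀ i ∈ t, f i ∈ K) :
    (∏ i ∈ t, f i) ∈ K ^ t.card := by
  classical
  induction t using Finset.induction_on with
  | empty => simp
  | insert _ _ hx ih =>
      rename_i a t'
      rw [Finset.prod_insert hx, Finset.card_insert_of_notMem hx, pow_succ, mul_comm (K ^ t'.card) K]
      exact Ideal.mul_mem_mul (hf a (Finset.mem_insert_self a t'))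
        (ih (fun i hi => hf i (Finset.mem_insert_of_mem hi)))

lemma Ymem {I D : Subgroup G} {s : ℕ} {σ : Fin s → G} {φt : G}
    (hdec : IsDecomp I σ) (hID : I ≤ D) (hφt : φt ∈ D)
    (A : Finset (Fin s)) (c0 d : ℕ) (T : MonoidAlgebra ℤ G)
    (hsum : A.card + c0 + d = s) (hc0 : 1 ≤ c0) (hT : T ∈ (kerIdeal D) ^ d)
    (hνT : 1 ≤ d → nuElt ℤ I * T = 0) :
    (∏ l ∈ A, nuL σ l) * (gtE I φt) ^ (c0 - 1) * T ∈ Jideal D σ := by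
  set K := kerIdeal D with hK
  set ν := nuElt ℤ I with hν
  set νA := (∏ l ∈ A, nuL σ l) with hνA
  set δ := (1 : MonoidAlgebra ℤ G) - MonoidAlgebra.of ℤ G φt⁻¹ with hδ
  set nn := (Nat.card I : MonoidAlgebra ℤ G) with hnn
  set ε := nn - ν with hε
  have hδK : δ ∈ K := delta_mem hφt
  have hεK : ε ∈ K := eps_mem_ker hdec hID
  have hgt : gtE I φt = δ + nn := by rw [gtE]
  have hnν : nn = ν + ε := by rw [hε]; ring
  have key : νA * (gtE I φt) ^ (c0 - 1) * T
      = ∑ e ∈ Finset.range ((c0-1)+1), ∑ k ∈ Finset.range ((c0-1-e)+1),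
          (((c0-1).choose e : MonoidAlgebra ℤ G) * ((c0-1-e).choose k : MonoidAlgebra ℤ G))
            * (ν ^ k * (νA * (δ ^ e * (ε ^ (c0-1-e-k) * T)))) := by
    rw [hgt, add_pow, Finset.mul_sum, Finset.sum_mul]
    refine Finset.sum_congr rfl fun e he => ?_
    have hexp : nn ^ (c0-1-e) = ∑ k ∈ Finset.range ((c0-1-e) + 1),
        ν ^ k * ε ^ ((c0-1-e) - k) * ((c0-1-e).choose k : MonoidAlgebra ℤ G) := by
      rw [hnν, add_pow]
    rw [hexp, Finset.mul_sum, Finset.sum_mul, Finset.mul_sum, Finset.sum_mul]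
    refine Finset.sum_congr rfl fun k hk => ?_
    ring
  rw [key]
  refine Submodule.sum_mem _ (fun e he => Submodule.sum_mem _ (fun k hk => ?_))
  rcases Nat.eq_zero_or_pos k with hk0 | hk1
  · subst hk0
    rw [pow_zero, one_mul]
    have hx : δ ^ e * (ε ^ (c0-1-e-0) * T) ∈ K ^ (e + ((c0-1-e-0) + d)) := by
      rw [pow_add, pow_add]
      exact Ideal.mul_mem_mul (Ideal.pow_mem_pow hδK e)
        (Ideal.mul_mem_mul (Ideal.pow_mem_pow hεK _) hT)
    have hle : s - 1 - A.card ≤ e + ((c0-1-e-0) + d) := by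
      have := Finset.mem_range.1 he; omega
    exact Ideal.mul_mem_left _ _ (claimJ D σ A (by omega) hle hx)
  · obtain ⟨k', rfl⟩ : ∃ k', k = k' + 1 := ⟨k - 1, by omega⟩
    rcases Nat.eq_zero_or_pos d with hd0 | hd1
    · -- d = 0 : use ν ∈ 𝓙
      have hνJ : ν ∈ Jideal D σ := nu_mem_J hdec (by omega)
      have heq : (((c0-1).choose e : MonoidAlgebra ℤ G) * ((c0-1-e).choose (k'+1) : MonoidAlgebra ℤ G))
            * (ν ^ (k'+1) * (νA * (δ ^ e * (ε ^ (c0-1-e-(k'+1)) * T))))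
          = ((((c0-1).choose e : MonoidAlgebra ℤ G) * ((c0-1-e).choose (k'+1) : MonoidAlgebra ℤ G))
            * (ν ^ k' * (νA * (δ ^ e * (ε ^ (c0-1-e-(k'+1)) * T))))) * ν := by ring
      rw [heq]
      exact Ideal.mul_mem_left _ _ hνJ
    · -- d ≥ 1 : ν * T = 0
      have hz : ν * T = 0 := hνT hd1
      have heq : (((c0-1).choose e : MonoidAlgebra ℤ G) * ((c0-1-e).choose (k'+1) : MonoidAlgebra ℤ G))
            * (ν ^ (k'+1) * (νA * (δ ^ e * (ε ^ (c0-1-e-(k'+1)) * T))))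
          = ((((c0-1).choose e : MonoidAlgebra ℤ G) * ((c0-1-e).choose (k'+1) : MonoidAlgebra ℤ G))
            * (ν ^ k' * (νA * (δ ^ e * (ε ^ (c0-1-e-(k'+1))))))) * (ν * T) := by ring
      rw [heq, hz, mul_zero]
      exact zero_mem _
end Part5
-- ============ Part 6: the main per-term membership lemma ============
section Part6
variable {G : Type} [CommGroup G] [Fintype G]

noncomputable def RHSideal (I D : Subgroup G) {s : ℕ} (σ : Fin s → G) (φt : G) :
    Ideal (MonoidAlgebra ℤ G) :=
  Ideal.span {gtE I φt} *
    (Ideal.span {(Nat.card I : MonoidAlgebra ℤ G) * nuElt ℤ I} +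
      Ideal.span {(Nat.card I : MonoidAlgebra ℤ G)
          - nuElt ℤ I * MonoidAlgebra.of ℤ G φt⁻¹} * Jideal D σ)

noncomputable def hnElt (I : Subgroup G) (φt : G) : MonoidAlgebra ℤ G :=
  (Nat.card I : MonoidAlgebra ℤ G) - nuElt ℤ I * MonoidAlgebra.of ℤ G φt⁻¹
    + (Nat.card I : MonoidAlgebra ℤ G) * nuElt ℤ I

lemma nuI_mul_prodA {I : Subgroup G} {s : ℕ} {σ : Fin s → G} (hdec : IsDecomp I σ)
    (A : Finset (Fin s)) :
    nuElt ℤ I * (∏ l ∈ A, nuL σ l)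
      = (∏ l ∈ A, (Nat.card (Subgroup.zpowers (σ l)) : MonoidAlgebra ℤ G)) * nuElt ℤ I := by
  classical
  induction A using Finset.induction_on with
  | empty => simp
  | insert _ _ hx ih =>
      rename_i a t'
      rw [Finset.prod_insert hx, Finset.prod_insert hx]
      calc nuElt ℤ I * (nuL σ a * ∏ l ∈ t', nuL σ l)
          = (nuElt ℤ I * ∏ l ∈ t', nuL σ l) * nuL σ a := by ring
        _ = ((∏ l ∈ t', (Nat.card (Subgroup.zpowers (σ l)) : MonoidAlgebra ℤ G)) * nuElt ℤ I)
              * nuL σ a := by rw [ih]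
        _ = (∏ l ∈ t', (Nat.card (Subgroup.zpowers (σ l)) : MonoidAlgebra ℤ G))
              * (nuElt ℤ I * nuL σ a) := by ring
        _ = _ := by rw [nuI_mul_nuL σ hdec a]; ring

lemma gnn_mem_RHS {I D : Subgroup G} {s : ℕ} {σ : Fin s → G} {φt : G}
    (x : MonoidAlgebra ℤ G) :
    gtE I φt * ((Nat.card I : MonoidAlgebra ℤ G) * nuElt ℤ I * x) ∈ RHSideal I D σ φt := by
  refine Ideal.mul_mem_mul (Ideal.mem_span_singleton_self _) ?_
  rw [Submodule.add_eq_sup]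
  exact Submodule.mem_sup_left (Ideal.mul_mem_right _ _ (Ideal.mem_span_singleton_self _))

lemma gq_mem_RHS {I D : Subgroup G} {s : ℕ} {σ : Fin s → G} {φt : G}
    {y : MonoidAlgebra ℤ G} (hy : y ∈ Jideal D σ) :
    gtE I φt * (((Nat.card I : MonoidAlgebra ℤ G)
      - nuElt ℤ I * MonoidAlgebra.of ℤ G φt⁻¹) * y) ∈ RHSideal I D σ φt := by
  refine Ideal.mul_mem_mul (Ideal.mem_span_singleton_self _) ?_
  rw [Submodule.add_eq_sup]
  exact Submodule.mem_sup_right (Ideal.mul_mem_mul (Ideal.mem_span_singleton_self _) hy)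

lemma main_term {I D : Subgroup G} {s : ℕ} {σ : Fin s → G} {φt : G}
    (hdec : IsDecomp I σ) (hID : I ≤ D) (hφt : φt ∈ D)
    (A : Finset (Fin s)) (c0 d : ℕ) (T : MonoidAlgebra ℤ G)
    (hsum : A.card + c0 + d = s) (hT : T ∈ (kerIdeal D) ^ d)
    (hd : 1 ≤ d → (nuElt ℤ I * T = 0 ∧ 1 ≤ c0))
    (hd0 : d = 0 → c0 = 0 → T = 1) :
    hnElt I φt * ((∏ l ∈ A, nuL σ l) * (gtE I φt) ^ c0 * T) ∈ RHSideal I D σ φt := by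
  set ν := nuElt ℤ I with hν
  set nn := (Nat.card I : MonoidAlgebra ℤ G) with hnn
  set q : MonoidAlgebra ℤ G := nn - ν * MonoidAlgebra.of ℤ G φt⁻¹ with hq
  set νA := (∏ l ∈ A, nuL σ l) with hνA
  have hsq : ν * ν = nn * ν := nuI_sq I
  rcases Nat.eq_zero_or_pos c0 with hc0 | hc0
  · -- c0 = 0 : then d = 0, T = 1, A = univ, X = ν
    have hd' : d = 0 := by
      by_contra hcon
      exact absurd ((hd (by omega)).2) (by omega)
    have hT1 : T = 1 := hd0 hd' (by omega)
    have hAuniv : A = Finset.univ := by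
      apply Finset.eq_univ_of_card
      rw [Fintype.card_fin]; omega
    have hXν : νA * (gtE I φt) ^ c0 * T = ν := by
      rw [hT1, hc0, pow_zero, mul_one, mul_one, hνA, hAuniv, hν, nu_prod hdec]
      rfl
    rw [hXν]
    have hident : hnElt I φt * ν = gtE I φt * (nn * ν * 1) := by
      rw [hnElt, gtE, mul_one]
      linear_combination (nn - MonoidAlgebra.of ℤ G φt⁻¹) * hsq
    rw [hident]
    exact gnn_mem_RHS _
  · -- c0 ≥ 1
    obtain ⟨c0', rfl⟩ : ∃ c0', c0 = c0' + 1 := ⟨c0 - 1, by omega⟩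
    have hsplit : hnElt I φt * (νA * (gtE I φt) ^ (c0'+1) * T)
        = gtE I φt * (q * (νA * (gtE I φt) ^ c0' * T))
          + nn * (ν * (νA * (gtE I φt) ^ (c0'+1) * T)) := by
      rw [hnElt, hq]; ring
    rw [hsplit]
    refine add_mem ?_ ?_
    · -- the q part
      have hY : νA * (gtE I φt) ^ c0' * T ∈ Jideal D σ := by
        have := Ymem hdec hID hφt A (c0'+1) d T hsum (by omega) hT (fun h => (hd h).1)
        simpa using this
      exact gq_mem_RHS hY
    · -- the nν part
      rcases Nat.eq_zero_or_pos d with hd' | hd1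
      · -- d = 0
        have heq : nn * (ν * (νA * (gtE I φt) ^ (c0'+1) * T))
            = gtE I φt * (nn * ν
                * ((∏ l ∈ A, (Nat.card (Subgroup.zpowers (σ l)) : MonoidAlgebra ℤ G))
                  * (gtE I φt) ^ c0' * T)) := by
          have h2 := nuI_mul_prodA hdec A
          calc nn * (ν * (νA * (gtE I φt) ^ (c0'+1) * T))
              = nn * ((ν * νA) * (gtE I φt) ^ (c0'+1) * T) := by ring
            _ = nn * (((∏ l ∈ A, (Nat.card (Subgroup.zpowers (σ l)) : MonoidAlgebra ℤ G)) * ν)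
                  * (gtE I φt) ^ (c0'+1) * T) := by rw [h2]
            _ = _ := by ring
        rw [heq]
        exact gnn_mem_RHS _
      · -- d ≥ 1 : ν T = 0
        have hz : ν * T = 0 := (hd hd1).1
        have heq : nn * (ν * (νA * (gtE I φt) ^ (c0'+1) * T))
            = nn * νA * (gtE I φt) ^ (c0'+1) * (ν * T) := by ring
        rw [heq, hz, mul_zero]
        exact zero_mem _
end Part6
-- ============ Part 7: termwise analysis of a minor ============
section Part7
variable {G : Type} [CommGroup G] [Fintype G]

lemma edge_entry_mem_ker {I D : Subgroup G} {s : ℕ} {σ : Fin s → G}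
    (hdec : IsDecomp I σ) (hID : I ≤ D) (p : rowPairs s) (j : Fin s) :
    Nmat (tauL σ) p j ∈ kerIdeal D := by
  rw [Nmat_row_eq]
  refine add_mem ?_ ?_ <;> split
  · exact neg_mem (tau_mem_ker hdec hID _)
  · exact zero_mem _
  · exact tau_mem_ker hdec hID _
  · exact zero_mem _

lemma nuI_mul_edge_entry {I : Subgroup G} {s : ℕ} {σ : Fin s → G}
    (hdec : IsDecomp I σ) (p : rowPairs s) (j : Fin s) :
    nuElt ℤ I * Nmat (tauL σ) p j = 0 := by
  rw [Nmat_row_eq, mul_add]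
  have h := nuI_mul_tauL σ hdec
  split <;> split <;> simp_all [mul_neg]

lemma term_mem {I D : Subgroup G} {s : ℕ} {σ : Fin s → G} {φt : G}
    (hdec : IsDecomp I σ) (hID : I ≤ D) (hφt : φt ∈ D)
    (r : Fin s → (Fin s ⊕ rowPairs s) ⊕ Fin s) (c : Fin s → Fin s)
    (hcinj : Function.Injective c)
    (hside : (∃ i l, r i = Sum.inr l) ∨ (∀ i p, r i ≠ Sum.inl (Sum.inr p)))
    (π : Equiv.Perm (Fin s)) :
    hnElt I φt * ∏ i, (bigMat I σ φt) (r (π i)) (c i) ∈ RHSideal I D σ φt := by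
  classical
  set f : Fin s → (Fin s ⊕ rowPairs s) ⊕ Fin s := fun i => r (π i) with hf
  set entry : Fin s → MonoidAlgebra ℤ G := fun i => (bigMat I σ φt) (f i) (c i) with hentry
  have hb0 : ∀ l j, bigMat I σ φt (Sum.inl (Sum.inl l)) j
      = if j = l then nuL σ l else 0 := fun l j => rfl
  have hb1 : ∀ l j, (bigMat I σ φt) (Sum.inr l) j
      = if j = l then gtE I φt else 0 := fun l j => rfl
  have hb2 : ∀ p j, (bigMat I σ φt) (Sum.inl (Sum.inr p)) j
      = Nmat (tauL σ) p j := fun p j => rfl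
  show hnElt I φt * ∏ i, entry i ∈ RHSideal I D σ φt
  by_cases hbad : ∃ i, entry i = 0
  · obtain ⟨i0, hi0⟩ := hbad
    rw [Finset.prod_eq_zero (Finset.mem_univ i0) hi0, mul_zero]
    exact zero_mem _
  push_neg at hbad
  set k : Fin s → Fin 3 := fun i =>
    Sum.elim (Sum.elim (fun _ => (0 : Fin 3)) (fun _ => 2)) (fun _ => 1) (f i) with hk
  set S0 := Finset.univ.filter (fun i => k i = 0) with hS0
  set S1 := Finset.univ.filter (fun i => k i = 1) with hS1
  set S2 := Finset.univ.filter (fun i => k i = 2) with hS2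
  -- entry values on each fiber
  have hval0 : ∀ i ∈ S0, entry i = nuL σ (c i) := by
    intro i hi
    have hki : k i = 0 := (Finset.mem_filter.1 hi).2
    rcases hfi : f i with (l | p) | l
    · have hE : entry i = if c i = l then nuL σ l else 0 := by
        simp only [hentry, hfi]; exact hb0 l (c i)
      by_cases hcl : c i = l
      · rw [hE, if_pos hcl, hcl]
      · exact absurd (by rw [hE, if_neg hcl]) (hbad i)
    · simp only [hk, hfi, Sum.elim_inl, Sum.elim_inr] at hki
      exact absurd hki (by decide)
    · simp only [hk, hfi, Sum.elim_inl, Sum.elim_inr] at hki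
      exact absurd hki (by decide)
  have hval1 : ∀ i ∈ S1, entry i = gtE I φt := by
    intro i hi
    have hki : k i = 1 := (Finset.mem_filter.1 hi).2
    rcases hfi : f i with (l | p) | l
    · simp only [hk, hfi, Sum.elim_inl, Sum.elim_inr] at hki
      exact absurd hki (by decide)
    · simp only [hk, hfi, Sum.elim_inl, Sum.elim_inr] at hki
      exact absurd hki (by decide)
    · have hE : entry i = if c i = l then gtE I φt else 0 := by
        simp only [hentry, hfi]; exact hb1 l (c i)
      by_cases hcl : c i = l
      · rw [hE, if_pos hcl]
      · exact absurd (by rw [hE, if_neg hcl]) (hbad i)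
  have hval2 : ∀ i ∈ S2, ∃ p, f i = Sum.inl (Sum.inr p) := by
    intro i hi
    have hki : k i = 2 := (Finset.mem_filter.1 hi).2
    rcases hfi : f i with (l | p) | l
    · simp only [hk, hfi, Sum.elim_inl, Sum.elim_inr] at hki
      exact absurd hki (by decide)
    · exact ⟨p, rfl⟩
    · simp only [hk, hfi, Sum.elim_inl, Sum.elim_inr] at hki
      exact absurd hki (by decide)
  -- split the product into the three fibers
  have hsplit : ∏ i, entry i
      = (∏ i ∈ S0, entry i) * (∏ i ∈ S1, entry i) * (∏ i ∈ S2, entry i) := by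
    rw [← Finset.prod_fiberwise Finset.univ k entry, Fin.prod_univ_three]
  have hP0 : (∏ i ∈ S0, entry i) = ∏ l ∈ S0.image c, nuL σ l := by
    rw [Finset.prod_congr rfl hval0, Finset.prod_image (fun a _ b _ h => hcinj h)]
  have hP1 : (∏ i ∈ S1, entry i) = (gtE I φt) ^ S1.card := by
    rw [Finset.prod_congr rfl hval1, Finset.prod_const]
  set T := ∏ i ∈ S2, entry i with hT
  have hTK : T ∈ (kerIdeal D) ^ S2.card := by
    refine prod_mem_pow _ _ _ (fun i hi => ?_)
    obtain ⟨p, hp⟩ := hval2 i hi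
    have hE : entry i = Nmat (tauL σ) p (c i) := by simp only [hentry, hp]; exact hb2 p (c i)
    rw [hE]
    exact edge_entry_mem_ker hdec hID p (c i)
  have hcards : (S0.image c).card + S1.card + S2.card = s := by
    have h1 : (S0.image c).card = S0.card := Finset.card_image_of_injOn (Function.Injective.injOn hcinj)
    have h2 := Finset.card_eq_sum_card_fiberwise
      (f := k) (t := Finset.univ) (s := Finset.univ) (fun x _ => Finset.mem_univ _)
    rw [Finset.card_univ, Fintype.card_fin, Fin.sum_univ_three] at h2
    rw [← hS0, ← hS1, ← hS2] at h2
    rw [h1]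
    omega
  have hνT : 1 ≤ S2.card → nuElt ℤ I * T = 0 := by
    intro hpos
    obtain ⟨i0, hi0⟩ := Finset.card_pos.1 hpos
    rw [hT, ← Finset.mul_prod_erase S2 entry hi0, ← mul_assoc]
    obtain ⟨p, hp⟩ := hval2 i0 hi0
    have hz : nuElt ℤ I * entry i0 = 0 := by
      have hE : entry i0 = Nmat (tauL σ) p (c i0) := by simp only [hentry, hp]; exact hb2 p (c i0)
      rw [hE]
      exact nuI_mul_edge_entry hdec p (c i0)
    rw [hz, zero_mul]
  have hc0pos : 1 ≤ S2.card → 1 ≤ S1.card := by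
    intro hpos
    rcases hside with ⟨i1, l, hl⟩ | hno
    · refine Finset.card_pos.2 ⟨π.symm i1, Finset.mem_filter.2 ⟨Finset.mem_univ _, ?_⟩⟩
      have hE : f (π.symm i1) = Sum.inr l := by rw [hf]; simp [hl]
      simp only [hk, hE, Sum.elim_inr]
    · obtain ⟨i0, hi0⟩ := Finset.card_pos.1 hpos
      obtain ⟨p, hp⟩ := hval2 i0 hi0
      exact absurd hp (hno (π i0) p)
  have hd0 : S2.card = 0 → T = 1 := by
    intro h
    rw [hT, Finset.card_eq_zero.1 h, Finset.prod_empty]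
  rw [hsplit, hP0, hP1]
  exact main_term hdec hID hφt (S0.image c) S1.card S2.card T hcards hTK
    (fun h => ⟨hνT h, hc0pos h⟩) (fun h _ => hd0 h)
end Part7
-- ============ Part 8: every minor is killed into the RHS ============
section Part8
variable {G : Type} [CommGroup G] [Fintype G]

lemma minor_mem {I D : Subgroup G} {s : ℕ} {σ : Fin s → G} {φt : G}
    (hdec : IsDecomp I σ) (hID : I ≤ D) (hφt : φt ∈ D)
    (r : Fin s → (Fin s ⊕ rowPairs s) ⊕ Fin s) (c : Fin s → Fin s) :
    hnElt I φt * ((bigMat I σ φt).submatrix r c).det ∈ RHSideal I D σ φt := by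
  classical
  by_cases hcinj : Function.Injective c
  · have hcbij : Function.Bijective c := Finite.injective_iff_bijective.1 hcinj
    have termwise : ((∃ i l, r i = Sum.inr l) ∨ (∀ i p, r i ≠ Sum.inl (Sum.inr p))) →
        hnElt I φt * ((bigMat I σ φt).submatrix r c).det ∈ RHSideal I D σ φt := by
      intro hside
      rw [Matrix.det_apply, Finset.mul_sum]
      refine Submodule.sum_mem _ (fun π _ => ?_)
      rw [mul_smul_comm, Units.smul_def, zsmul_eq_mul]
      refine Ideal.mul_mem_left _ _ ?_
      have hterm := term_mem hdec hID hφt r c hcinj hside π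
      simpa [Matrix.submatrix_apply] using hterm
    by_cases hedge : ∃ i p, r i = Sum.inl (Sum.inr p)
    · by_cases hg : ∃ i l, r i = Sum.inr l
      · exact termwise (Or.inl hg)
      · -- no g̃ rows but an edge : everything dies
        obtain ⟨i0, p, hi0⟩ := hedge
        set det := ((bigMat I σ φt).submatrix r c).det with hdet
        have h1 : nuElt ℤ I * det = 0 := nuI_mul_det_eq_zero σ φt hdec r c hi0
        have hng : ∀ i l, r i ≠ Sum.inr l := by push_neg at hg; exact hg
        have hτ : ∀ l0, tauL σ l0 * det = 0 := tauL_mul_det_eq_zero I σ φt r hng c hcbij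
        have h2 : ((Nat.card I : MonoidAlgebra ℤ G) - nuElt ℤ I) * det = 0 := by
          have hsp := eps_mem_span hdec
          have hAnn : ∀ y ∈ Ideal.span {x : MonoidAlgebra ℤ G |
              ∃ l, x = MonoidAlgebra.of ℤ G (σ l) - 1}, y * det = 0 := by
            intro y hy
            refine Submodule.span_induction ?_ ?_ ?_ ?_ hy
            · rintro x ⟨l, rfl⟩
              exact hτ l
            · simp
            · intro x y _ _ hx hy'
              rw [add_mul, hx, hy', add_zero]
            · intro a x _ hx
              rw [smul_eq_mul, mul_assoc, hx, mul_zero]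
          exact hAnn _ hsp
        have hsplit : hnElt I φt * det
            = ((Nat.card I : MonoidAlgebra ℤ G) - nuElt ℤ I) * det
              + (1 - MonoidAlgebra.of ℤ G φt⁻¹) * (nuElt ℤ I * det)
              + (Nat.card I : MonoidAlgebra ℤ G) * (nuElt ℤ I * det) := by
          rw [hnElt]; ring
        rw [hsplit, h1, h2, mul_zero, mul_zero, add_zero, add_zero]
        exact zero_mem _
    · push_neg at hedge
      exact termwise (Or.inr hedge)
  · -- columns repeat : determinant vanishes
    have : ∃ i j, c i = c j ∧ i ≠ j := by
      unfold Function.Injective at hcinj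
      push_neg at hcinj
      obtain ⟨i, j, h1, h2⟩ := hcinj
      exact ⟨i, j, h1, h2⟩
    obtain ⟨i, j, hij, hne⟩ := this
    have hdet : ((bigMat I σ φt).submatrix r c).det = 0 :=
      Matrix.det_zero_of_column_eq hne (fun k => by simp [Matrix.submatrix_apply, hij])
    rw [hdet, mul_zero]
    exact zero_mem _
end Part8
-- ============ Part 9: realization of minors ============
section Part9
variable {G : Type} [CommGroup G] [Fintype G]

lemma det_expand_single {n : ℕ} {A : Type} [CommRing A]
    (S : Matrix (Fin (n+1)) (Fin (n+1)) A) (k0 : Fin (n+1))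
    (h : ∀ k, k ≠ k0 → S k0 k = 0) :
    S.det = S k0 k0 * (S.submatrix k0.succAbove k0.succAbove).det := by
  rw [Matrix.det_succ_row S k0]
  rw [Finset.sum_eq_single k0]
  · have : (-1 : A) ^ ((k0 : ℕ) + (k0 : ℕ)) = 1 := Even.neg_one_pow ⟨k0, rfl⟩
    rw [this, one_mul]
  · intro b _ hb
    rw [h b hb, mul_zero, zero_mul]
  · intro hk0
    exact absurd (Finset.mem_univ k0) hk0
end Part9

section Part9b
variable {G : Type} [CommGroup G] [Fintype G]

lemma update_pow_eq {s : ℕ} (σ : Fin s → G) (m : Fin s → ℕ) (j : Fin s) (v : ℕ) :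
    (fun l => tauL σ l ^ (Function.update m j v l))
      = Function.update (fun l => tauL σ l ^ m l) j (tauL σ j ^ v) := by
  funext l
  by_cases h : l = j
  · subst h; simp
  · simp [Function.update_of_ne h]

lemma tau_prod_update {s : ℕ} (σ : Fin s → G) (m : Fin s → ℕ) (j : Fin s) (hj : m j ≠ 0) :
    tauL σ j * ∏ l, tauL σ l ^ (Function.update m j (m j - 1) l) = ∏ l, tauL σ l ^ m l := by
  rw [update_pow_eq, Finset.prod_update_of_mem (Finset.mem_univ j),
    Finset.sdiff_singleton_eq_erase]
  rw [← Finset.mul_prod_erase Finset.univ (fun l => tauL σ l ^ m l) (Finset.mem_univ j)]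
  obtain ⟨t, ht⟩ : ∃ t, m j = t + 1 := ⟨m j - 1, by omega⟩
  rw [ht]
  have h1 : t + 1 - 1 = t := by omega
  rw [h1, ← mul_assoc, ← pow_succ']

lemma sum_update_sub {s : ℕ} (m : Fin s → ℕ) (j : Fin s) (hj : m j ≠ 0) :
    ∑ l, Function.update m j (m j - 1) l = (∑ l, m l) - 1 := by
  rw [Finset.sum_update_of_mem (Finset.mem_univ j), Finset.sdiff_singleton_eq_erase]
  rw [← Finset.add_sum_erase Finset.univ m (Finset.mem_univ j)]
  omega

lemma big_realize (I : Subgroup G) {s : ℕ} (σ : Fin s → G) (φt : G) :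
    ∀ (u : ℕ) (c : Fin u → Fin s), Function.Injective c →
    ∀ (A C : Finset (Fin s)) (m : Fin s → ℕ),
      Disjoint A C → (∀ x ∈ A ∪ C, ∃ k, c k = x) →
      A.card + C.card + (∑ l, m l) = u →
      (0 < ∑ l, m l → ∃ j, m j ≠ 0 ∧ (j ∈ C ∨ ∀ k, c k ≠ j)) →
      ∃ (r : Fin u → (Fin s ⊕ rowPairs s) ⊕ Fin s) (ε : MonoidAlgebra ℤ G),
        (ε = 1 ∨ ε = -1) ∧
        ((bigMat I σ φt).submatrix r c).det
          = ε * ((∏ l ∈ A, nuL σ l) * (gtE I φt) ^ C.card * ∏ l, (tauL σ l) ^ (m l)) := by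
  intro u
  induction u with
  | zero =>
      intro c hc A C m hdisj hrange hcount hinv
      have hA : A = ∅ := Finset.card_eq_zero.1 (by omega)
      have hC : C = ∅ := Finset.card_eq_zero.1 (by omega)
      have hm : ∀ l, m l = 0 := by
        intro l
        have := (Finset.sum_eq_zero_iff.1 (by omega : ∑ l, m l = 0)) l (Finset.mem_univ l)
        exact this
      refine ⟨fun k => k.elim0, 1, Or.inl rfl, ?_⟩
      rw [Matrix.det_fin_zero, hA, hC]
      simp [hm]
  | succ u IH =>
      intro c hc A C m hdisj hrange hcount hinv
      rcases Finset.eq_empty_or_nonempty A with hAe | hA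
      case inr =>
        -- eat a ν row
        obtain ⟨l0, hl0⟩ := hA
        obtain ⟨k0, hk0⟩ := hrange l0 (Finset.mem_union_left _ hl0)
        set c' : Fin u → Fin s := c ∘ k0.succAbove with hc'def
        have hc' : Function.Injective c' := hc.comp (Fin.succAbove_right_injective)
        have hrange' : ∀ x ∈ A.erase l0 ∪ C, ∃ k', c' k' = x := by
          intro x hx
          have hxAC : x ∈ A ∪ C := by
            rcases Finset.mem_union.1 hx with h | h
            · exact Finset.mem_union_left _ (Finset.mem_of_mem_erase h)
            · exact Finset.mem_union_right _ h
          obtain ⟨k, hk⟩ := hrange x hxAC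
          have hxl0 : x ≠ l0 := by
            rcases Finset.mem_union.1 hx with h | h
            · exact Finset.ne_of_mem_erase h
            · intro hcon
              subst hcon
              exact (Finset.disjoint_left.1 hdisj hl0) h
          have hkk0 : k ≠ k0 := by
            intro hcon; subst hcon; exact hxl0 (hk0 ▸ hk.symm ▸ rfl)
          obtain ⟨k', hk'⟩ := Fin.exists_succAbove_eq hkk0
          exact ⟨k', by rw [hc'def]; simp only [Function.comp_apply, hk']; exact hk⟩
        have hcount' : (A.erase l0).card + C.card + (∑ l, m l) = u := by
          rw [Finset.card_erase_of_mem hl0]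
          have : 1 ≤ A.card := Finset.card_pos.2 ⟨l0, hl0⟩
          omega
        have hinv' : 0 < ∑ l, m l → ∃ j, m j ≠ 0 ∧ (j ∈ C ∨ ∀ k', c' k' ≠ j) := by
          intro hd
          obtain ⟨j, hj1, hj2⟩ := hinv hd
          exact ⟨j, hj1, hj2.imp id (fun h k' => h _)⟩
        obtain ⟨r', ε', hε', hdet'⟩ := IH c' hc' (A.erase l0) C m
          (Finset.disjoint_of_subset_left (Finset.erase_subset _ _) hdisj)
          hrange' hcount' hinv'
        set r : Fin (u+1) → (Fin s ⊕ rowPairs s) ⊕ Fin s :=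
          Fin.insertNth k0 (Sum.inl (Sum.inl l0)) r' with hrdef
        refine ⟨r, ε', hε', ?_⟩
        have hrow : ∀ k, k ≠ k0 → ((bigMat I σ φt).submatrix r c) k0 k = 0 := by
          intro k hk
          have h1 : r k0 = Sum.inl (Sum.inl l0) := by rw [hrdef]; simp
          have h2 : ((bigMat I σ φt).submatrix r c) k0 k
              = if c k = l0 then nuL σ l0 else 0 := by
            rw [Matrix.submatrix_apply, h1]; rfl
          rw [h2, if_neg (fun hcon => hk (hc (hcon.trans hk0.symm)))]
        rw [det_expand_single _ k0 hrow]
        have hdiag : ((bigMat I σ φt).submatrix r c) k0 k0 = nuL σ l0 := by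
          have h1 : r k0 = Sum.inl (Sum.inl l0) := by rw [hrdef]; simp
          have h2 : ((bigMat I σ φt).submatrix r c) k0 k0
              = if c k0 = l0 then nuL σ l0 else 0 := by
            rw [Matrix.submatrix_apply, h1]; rfl
          rw [h2, if_pos hk0]
        have hminor : (((bigMat I σ φt).submatrix r c).submatrix k0.succAbove k0.succAbove)
            = (bigMat I σ φt).submatrix r' c' := by
          ext i j
          simp only [Matrix.submatrix_apply, hrdef, hc'def, Function.comp_apply]
          rw [Fin.insertNth_apply_succAbove]
        rw [hdiag, hminor, hdet']
        rw [← Finset.mul_prod_erase A (fun l => nuL σ l) hl0]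
        ring
      case inl =>
      subst hAe
      rcases Finset.eq_empty_or_nonempty C with hCe | hC
      case inr =>
        -- eat a g̃ row
        obtain ⟨l0, hl0⟩ := hC
        obtain ⟨k0, hk0⟩ := hrange l0 (Finset.mem_union_right _ hl0)
        set c' : Fin u → Fin s := c ∘ k0.succAbove with hc'def
        have hc' : Function.Injective c' := hc.comp (Fin.succAbove_right_injective)
        have hrange' : ∀ x ∈ (∅ : Finset (Fin s)) ∪ C.erase l0, ∃ k', c' k' = x := by
          intro x hx
          rw [Finset.empty_union] at hx
          obtain ⟨k, hk⟩ := hrange x (Finset.mem_union_right _ (Finset.mem_of_mem_erase hx))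
          have hxl0 : x ≠ l0 := Finset.ne_of_mem_erase hx
          have hkk0 : k ≠ k0 := by
            intro hcon; subst hcon; exact hxl0 (hk0 ▸ hk.symm ▸ rfl)
          obtain ⟨k', hk'⟩ := Fin.exists_succAbove_eq hkk0
          exact ⟨k', by rw [hc'def]; simp only [Function.comp_apply, hk']; exact hk⟩
        have hcount' : (∅ : Finset (Fin s)).card + (C.erase l0).card + (∑ l, m l) = u := by
          rw [Finset.card_erase_of_mem hl0]
          have : 1 ≤ C.card := Finset.card_pos.2 ⟨l0, hl0⟩
          simp only [Finset.card_empty] at hcount ⊢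
          omega
        have hinv' : 0 < ∑ l, m l → ∃ j, m j ≠ 0 ∧ (j ∈ C.erase l0 ∨ ∀ k', c' k' ≠ j) := by
          intro hd
          obtain ⟨j, hj1, hj2⟩ := hinv hd
          refine ⟨j, hj1, ?_⟩
          rcases hj2 with h | h
          · by_cases hjl0 : j = l0
            · subst hjl0
              refine Or.inr (fun k' => ?_)
              intro hcon
              exact (Fin.succAbove_ne k0 k') (hc (hcon.trans hk0.symm))
            · exact Or.inl (Finset.mem_erase.2 ⟨hjl0, h⟩)
          · exact Or.inr (fun k' => h _)
        obtain ⟨r', ε', hε', hdet'⟩ := IH c' hc' ∅ (C.erase l0) m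
          (Finset.disjoint_empty_left _) hrange' hcount' hinv'
        set r : Fin (u+1) → (Fin s ⊕ rowPairs s) ⊕ Fin s :=
          Fin.insertNth k0 (Sum.inr l0) r' with hrdef
        refine ⟨r, ε', hε', ?_⟩
        have hrow : ∀ k, k ≠ k0 → ((bigMat I σ φt).submatrix r c) k0 k = 0 := by
          intro k hk
          have h1 : r k0 = Sum.inr l0 := by rw [hrdef]; simp
          have h2 : ((bigMat I σ φt).submatrix r c) k0 k
              = if c k = l0 then gtE I φt else 0 := by
            rw [Matrix.submatrix_apply, h1]; rfl
          rw [h2, if_neg (fun hcon => hk (hc (hcon.trans hk0.symm)))]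
        rw [det_expand_single _ k0 hrow]
        have hdiag : ((bigMat I σ φt).submatrix r c) k0 k0 = gtE I φt := by
          have h1 : r k0 = Sum.inr l0 := by rw [hrdef]; simp
          have h2 : ((bigMat I σ φt).submatrix r c) k0 k0
              = if c k0 = l0 then gtE I φt else 0 := by
            rw [Matrix.submatrix_apply, h1]; rfl
          rw [h2, if_pos hk0]
        have hminor : (((bigMat I σ φt).submatrix r c).submatrix k0.succAbove k0.succAbove)
            = (bigMat I σ φt).submatrix r' c' := by
          ext i j
          simp only [Matrix.submatrix_apply, hrdef, hc'def, Function.comp_apply]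
          rw [Fin.insertNth_apply_succAbove]
        rw [hdiag, hminor, hdet']
        have hCpow : (gtE I φt) ^ C.card = gtE I φt * (gtE I φt) ^ (C.erase l0).card := by
          rw [Finset.card_erase_of_mem hl0]
          have h1 : 1 ≤ C.card := Finset.card_pos.2 ⟨l0, hl0⟩
          obtain ⟨t, ht⟩ : ∃ t, C.card = t + 1 := ⟨C.card - 1, by omega⟩
          rw [ht, pow_succ]
          have : t + 1 - 1 = t := by omega
          rw [this]
          ring
        rw [hCpow]
        ring
      case inl =>
      subst hCe
      -- edge row
      have hd : 0 < ∑ l, m l := by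
        simp only [Finset.card_empty] at hcount
        omega
      obtain ⟨j, hj, hjor⟩ := hinv hd
      have hjnr : ∀ k, c k ≠ j := by
        rcases hjor with h | h
        · exact absurd h (Finset.notMem_empty j)
        · exact h
      set m' := Function.update m j (m j - 1) with hm'def
      have hm'sum : ∑ l, m' l = u := by
        rw [hm'def, sum_update_sub m j hj]
        simp only [Finset.card_empty] at hcount
        omega
      -- choose the position k0 together with the invariant for the recursive call
      have hk0ex : ∃ k0 : Fin (u+1), (0 < ∑ l, m' l →
          ∃ j2, m' j2 ≠ 0 ∧ (j2 ∈ (∅ : Finset (Fin s)) ∨ ∀ k', (c ∘ k0.succAbove) k' ≠ j2)) := by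
        by_cases hcase : ∃ j2, m' j2 ≠ 0 ∧ ∀ k, c k ≠ j2
        · obtain ⟨j2, hj2a, hj2b⟩ := hcase
          exact ⟨0, fun _ => ⟨j2, hj2a, Or.inr (fun k' => hj2b _)⟩⟩
        · push_neg at hcase
          by_cases hd' : 0 < ∑ l, m' l
          · obtain ⟨w, _, hw⟩ := Finset.exists_ne_zero_of_sum_ne_zero
              (by omega : ∑ l, m' l ≠ 0)
            obtain ⟨k0, hk0w⟩ := hcase w hw
            refine ⟨k0, fun _ => ⟨w, hw, Or.inr (fun k' hcon => ?_)⟩⟩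
            exact (Fin.succAbove_ne k0 k') (hc (hcon.trans hk0w.symm))
          · exact ⟨0, fun h => absurd h hd'⟩
      obtain ⟨k0, hinv'⟩ := hk0ex
      set c' : Fin u → Fin s := c ∘ k0.succAbove with hc'def
      have hc' : Function.Injective c' := hc.comp (Fin.succAbove_right_injective)
      obtain ⟨r', ε', hε', hdet'⟩ := IH c' hc' ∅ ∅ m'
        (Finset.disjoint_empty_left _)
        (by intro x hx; simp at hx) (by simpa using hm'sum) hinv'
      have hvj : c k0 ≠ j := hjnr k0
      set edge : rowPairs s := if h : c k0 < j then ⟨(c k0, j), h⟩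
        else ⟨(j, c k0), lt_of_le_of_ne (not_lt.1 h) hvj.symm⟩ with hedge
      set r : Fin (u+1) → (Fin s ⊕ rowPairs s) ⊕ Fin s :=
        Fin.insertNth k0 (Sum.inl (Sum.inr edge)) r' with hrdef
      have hrow0 : ∀ k, ((bigMat I σ φt).submatrix r c) k0 k = Nmat (tauL σ) edge (c k) := by
        intro k
        have h1 : r k0 = Sum.inl (Sum.inr edge) := by rw [hrdef]; simp
        rw [Matrix.submatrix_apply, h1]; rfl
      have hrow : ∀ k, k ≠ k0 → ((bigMat I σ φt).submatrix r c) k0 k = 0 := by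
        intro k hk
        rw [hrow0]
        have hck1 : c k ≠ c k0 := fun hcon => hk (hc hcon)
        have hck2 : c k ≠ j := hjnr k
        rw [hedge]
        split
        · show (if c k = c k0 then _ else if c k = j then _ else 0) = 0
          rw [if_neg hck1, if_neg hck2]
        · show (if c k = j then _ else if c k = c k0 then _ else 0) = 0
          rw [if_neg hck2, if_neg hck1]
      have hminor : (((bigMat I σ φt).submatrix r c).submatrix k0.succAbove k0.succAbove)
          = (bigMat I σ φt).submatrix r' c' := by
        ext i j'
        simp only [Matrix.submatrix_apply, hrdef, hc'def, Function.comp_apply]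
        rw [Fin.insertNth_apply_succAbove]
      have hτm : tauL σ j * ∏ l, tauL σ l ^ (m' l) = ∏ l, tauL σ l ^ (m l) :=
        tau_prod_update σ m j hj
      have hdiag : ((bigMat I σ φt).submatrix r c) k0 k0 = -tauL σ j
          ∨ ((bigMat I σ φt).submatrix r c) k0 k0 = tauL σ j := by
        rw [hrow0, hedge]
        split
        · left
          show (if c k0 = c k0 then -tauL σ j else _) = _
          rw [if_pos rfl]
        · right
          show (if c k0 = j then _ else if c k0 = c k0 then tauL σ j else 0) = _
          rw [if_neg hvj, if_pos rfl]
      rcases hdiag with hD | hD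
      · refine ⟨r, -ε', ?_, ?_⟩
        · rcases hε' with h | h
          · right; rw [h]
          · left; rw [h]; ring
        · rw [det_expand_single _ k0 hrow, hminor, hdet', hD]
          simp only [Finset.prod_empty, Finset.card_empty, pow_zero]
          calc -tauL σ j * (ε' * (1 * 1 * ∏ l, tauL σ l ^ m' l))
              = -ε' * (tauL σ j * ∏ l, tauL σ l ^ m' l) := by ring
            _ = -ε' * (1 * 1 * ∏ l, tauL σ l ^ m l) := by rw [hτm]; ring
      · refine ⟨r, ε', hε', ?_⟩
        rw [det_expand_single _ k0 hrow, hminor, hdet', hD]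
        simp only [Finset.prod_empty, Finset.card_empty, pow_zero]
        calc tauL σ j * (ε' * (1 * 1 * ∏ l, tauL σ l ^ m' l))
            = ε' * (tauL σ j * ∏ l, tauL σ l ^ m' l) := by ring
          _ = ε' * (1 * 1 * ∏ l, tauL σ l ^ m l) := by rw [hτm]; ring
end Part9b
-- ============ Part 10: membership in the Fitting ideal ============
section Part10
variable {G : Type} [CommGroup G] [Fintype G]

lemma det_mem_fitt {mty : Type} [Fintype mty] {s : ℕ}
    (A : Matrix mty (Fin s) (MonoidAlgebra ℤ G))
    (r' : Fin s → mty) (c' : Fin s → Fin s) :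
    (A.submatrix r' c').det ∈ fittMat A 0 := by
  have he : Fintype.card (Fin s) - 0 = s := by simp
  refine Ideal.subset_span ⟨r' ∘ Fin.cast he, c' ∘ Fin.cast he, ?_⟩
  have h1 : A.submatrix (r' ∘ Fin.cast he) (c' ∘ Fin.cast he)
      = (A.submatrix r' c').submatrix (finCongr he) (finCongr he) := rfl
  rw [h1, Matrix.det_submatrix_equiv_self]

lemma fitt_elt_eq {mty : Type} [Fintype mty] {s : ℕ}
    (A : Matrix mty (Fin s) (MonoidAlgebra ℤ G))
    {x : MonoidAlgebra ℤ G}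
    (hx : ∃ (r : Fin (Fintype.card (Fin s) - 0) → mty)
      (c : Fin (Fintype.card (Fin s) - 0) → Fin s), x = (A.submatrix r c).det) :
    ∃ (r' : Fin s → mty) (c' : Fin s → Fin s), x = (A.submatrix r' c').det := by
  obtain ⟨r, c, rfl⟩ := hx
  have he : s = Fintype.card (Fin s) - 0 := by simp
  refine ⟨r ∘ Fin.cast he, c ∘ Fin.cast he, ?_⟩
  have h1 : A.submatrix (r ∘ Fin.cast he) (c ∘ Fin.cast he)
      = (A.submatrix r c).submatrix (finCongr he) (finCongr he) := rfl
  rw [h1, Matrix.det_submatrix_equiv_self]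

lemma nu_mem_F {I : Subgroup G} {s : ℕ} {σ : Fin s → G} {φt : G} (hdec : IsDecomp I σ) :
    nuElt ℤ I ∈ fittMat (bigMat I σ φt) 0 := by
  obtain ⟨r, ε, hε, hdet⟩ := big_realize I σ φt s id Function.injective_id
    Finset.univ ∅ (fun _ => 0) (Finset.disjoint_empty_right _)
    (fun x _ => ⟨x, rfl⟩) (by simp) (by simp)
  have hval : nuElt ℤ I = ε * ((bigMat I σ φt).submatrix r id).det := by
    rw [hdet, nu_prod hdec]
    rcases hε with h | h <;> rw [h] <;> simp [nuL]
  rw [hval]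
  exact Ideal.mul_mem_left _ _ (det_mem_fitt _ r id)

lemma base_mem_F {I : Subgroup G} {s : ℕ} {σ : Fin s → G} {φt : G}
    (A : Finset (Fin s)) (c0 : ℕ) (m : Fin s → ℕ)
    (hc0 : 1 ≤ c0) (hsum : A.card + c0 + (∑ l, m l) = s) :
    (∏ l ∈ A, nuL σ l) * (gtE I φt) ^ c0 * (∏ l, tauL σ l ^ m l)
      ∈ fittMat (bigMat I σ φt) 0 := by
  classical
  by_cases hbad : ∃ l ∈ A, m l ≠ 0
  · -- the element is zero
    obtain ⟨l0, hl0A, hl0m⟩ := hbad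
    obtain ⟨t, ht⟩ : ∃ t, m l0 = t + 1 := ⟨m l0 - 1, by omega⟩
    have heq : (∏ l ∈ A, nuL σ l) * (gtE I φt) ^ c0 * (∏ l, tauL σ l ^ m l)
        = ((∏ l ∈ A.erase l0, nuL σ l) * (gtE I φt) ^ c0 * (tauL σ l0 ^ t
            * ∏ l ∈ Finset.univ.erase l0, tauL σ l ^ m l))
          * (tauL σ l0 * nuL σ l0) := by
      rw [← Finset.mul_prod_erase A _ hl0A,
        ← Finset.mul_prod_erase Finset.univ (fun l => tauL σ l ^ m l) (Finset.mem_univ l0)]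
      rw [ht, pow_succ]
      ring
    rw [heq, tauL_mul_nuL, mul_zero]
    exact zero_mem _
  · push_neg at hbad
    -- find the root set C
    have hAcompl : (Finset.univ \ A).card = s - A.card := by
      rw [Finset.card_sdiff_of_subset (Finset.subset_univ A), Finset.card_univ, Fintype.card_fin]
    have hCex : ∃ C : Finset (Fin s), Disjoint A C ∧ C.card = c0 ∧
        (0 < ∑ l, m l → ∃ j, m j ≠ 0 ∧ j ∈ C) := by
      rcases Nat.eq_zero_or_pos (∑ l, m l) with hd | hd
      · obtain ⟨C, hCsub, hCcard⟩ := Finset.exists_subset_card_eq (s := Finset.univ \ A) (n := c0)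
          (by omega)
        refine ⟨C, ?_, hCcard, fun h => absurd h (by omega)⟩
        exact Finset.disjoint_left.2
          (fun x hx hxC => (Finset.mem_sdiff.1 (hCsub hxC)).2 hx)
      · obtain ⟨j0, _, hj0⟩ := Finset.exists_ne_zero_of_sum_ne_zero (by omega : ∑ l, m l ≠ 0)
        have hj0A : j0 ∉ A := fun h => hj0 (hbad j0 h)
        obtain ⟨C', hC'sub, hC'card⟩ := Finset.exists_subset_card_eq
          (s := (Finset.univ \ A).erase j0) (n := c0 - 1)
          (by rw [Finset.card_erase_of_mem (Finset.mem_sdiff.2 ⟨Finset.mem_univ _, hj0A⟩)]; omega)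
        refine ⟨insert j0 C', ?_, ?_, fun _ => ⟨j0, hj0, Finset.mem_insert_self _ _⟩⟩
        · refine Finset.disjoint_left.2 (fun x hx hxC => ?_)
          rcases Finset.mem_insert.1 hxC with h | h
          · exact hj0A (h ▸ hx)
          · exact (Finset.mem_sdiff.1 (Finset.mem_of_mem_erase (hC'sub h))).2 hx
        · rw [Finset.card_insert_of_notMem
            (fun h => (Finset.notMem_erase j0 _) (hC'sub h)), hC'card]
          omega
    obtain ⟨C, hdisj, hCcard, hCroot⟩ := hCex
    obtain ⟨r, ε, hε, hdet⟩ := big_realize I σ φt s id Function.injective_id A C m hdisj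
      (fun x _ => ⟨x, rfl⟩) (by rw [hCcard]; simpa using hsum)
      (fun h => (hCroot h).imp (fun j hj => ⟨hj.1, Or.inl hj.2⟩))
    rw [hCcard] at hdet
    have hval : (∏ l ∈ A, nuL σ l) * (gtE I φt) ^ c0 * (∏ l, tauL σ l ^ m l)
        = ε * ((bigMat I σ φt).submatrix r id).det := by
      rw [hdet]
      rcases hε with h | h <;> rw [h] <;> ring
    rw [hval]
    exact Ideal.mul_mem_left _ _ (det_mem_fitt _ r id)
end Part10
-- ============ Part 11: Kid induction ============
section Part11
variable {G : Type} [CommGroup G] [Fintype G]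

lemma card_sub_nu_mem {H : Subgroup G} {J : Ideal (MonoidAlgebra ℤ G)}
    (hle : (H : Set G) ⊆ augSG J) :
    (Nat.card H : MonoidAlgebra ℤ G) - nuElt ℤ H ∈ J := by
  have hcard : (Nat.card H : MonoidAlgebra ℤ G) = ∑ _h : H, (1 : MonoidAlgebra ℤ G) := by
    simp [Nat.card_eq_fintype_card]
  rw [hcard, nuElt_eq, ← Finset.sum_sub_distrib]
  refine Submodule.sum_mem _ (fun h _ => ?_)
  have heq : (1 : MonoidAlgebra ℤ G) - MonoidAlgebra.of ℤ G (h : G)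
      = -(MonoidAlgebra.of ℤ G (h : G) - 1) := by ring
  rw [heq]
  exact neg_mem (hle h.2)

lemma nuL_split {s : ℕ} (σ : Fin s → G) (l : Fin s) :
    ∃ ρ, (Nat.card (Subgroup.zpowers (σ l)) : MonoidAlgebra ℤ G)
      = nuL σ l + tauL σ l * ρ := by
  have hσ : σ l ∈ augSG (Ideal.span {tauL σ l}) :=
    Ideal.subset_span rfl
  have hle : ((Subgroup.zpowers (σ l)) : Set G) ⊆ augSG (Ideal.span {tauL σ l}) := by
    intro x hx
    exact Subgroup.zpowers_le.2 hσ hx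
  have hmem := card_sub_nu_mem hle
  obtain ⟨ρ, hρ⟩ := Ideal.mem_span_singleton'.1 hmem
  refine ⟨ρ, ?_⟩
  have h2 : ρ * tauL σ l = (Nat.card (Subgroup.zpowers (σ l)) : MonoidAlgebra ℤ G) - nuL σ l := hρ
  linear_combination -h2

lemma update_succ_prod {s : ℕ} (σ : Fin s → G) (m : Fin s → ℕ) (l0 : Fin s) :
    ∏ l, tauL σ l ^ (Function.update m l0 (m l0 + 1) l)
      = tauL σ l0 * ∏ l, tauL σ l ^ (m l) := by
  have h := tau_prod_update σ (Function.update m l0 (m l0 + 1)) l0 (by simp)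
  have h2 : Function.update (Function.update m l0 (m l0 + 1)) l0
      ((Function.update m l0 (m l0 + 1)) l0 - 1) = m := by
    simp only [Function.update_self]
    rw [Function.update_idem]
    simp only [Nat.add_sub_cancel]
    exact Function.update_eq_self l0 m
  rw [h2] at h
  rw [← h]

lemma update_succ_sum {s : ℕ} (m : Fin s → ℕ) (l0 : Fin s) :
    ∑ l, (Function.update m l0 (m l0 + 1)) l = (∑ l, m l) + 1 := by
  rw [Finset.sum_update_of_mem (Finset.mem_univ l0), Finset.sdiff_singleton_eq_erase]
  rw [← Finset.add_sum_erase Finset.univ m (Finset.mem_univ l0)]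
  omega

lemma Kid {I D : Subgroup G} {s : ℕ} {σ : Fin s → G} {φt : G}
    (hdec : IsDecomp I σ)
    (hgen : kerIdeal D ≤ Ideal.span
      {x | (∃ l, x = tauL σ l) ∨ x = 1 - MonoidAlgebra.of ℤ G φt⁻¹}) :
    ∀ (f : ℕ) (A : Finset (Fin s)) (c0 : ℕ) (m : Fin s → ℕ),
      1 ≤ c0 → A.card + c0 + (∑ l, m l) + f = s →
      ∀ x ∈ (kerIdeal D) ^ f,
      (∏ l ∈ A, nuL σ l) * (gtE I φt) ^ c0 * (∏ l, tauL σ l ^ m l) * x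
        ∈ fittMat (bigMat I σ φt) 0 := by
  intro f
  induction f with
  | zero =>
      intro A c0 m hc0 hsum x _
      exact Ideal.mul_mem_right x _ (base_mem_F A c0 m hc0 (by omega))
  | succ f IH =>
      intro A c0 m hc0 hsum x hx
      rw [pow_succ] at hx
      refine Submodule.mul_induction_on hx ?_ ?_
      · intro p hp z hz
        have hz' := hgen hz
        refine Submodule.span_induction ?_ ?_ ?_ ?_ hz'
        · rintro w (⟨l0, rfl⟩ | rfl)
          · -- generator τ_{l0}
            have hmem := IH A c0 (Function.update m l0 (m l0 + 1)) hc0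
              (by rw [update_succ_sum]; omega) p hp
            have heq : (∏ l ∈ A, nuL σ l) * (gtE I φt) ^ c0 * (∏ l, tauL σ l ^ m l)
                  * (p * tauL σ l0)
                = (∏ l ∈ A, nuL σ l) * (gtE I φt) ^ c0
                  * (∏ l, tauL σ l ^ (Function.update m l0 (m l0 + 1) l)) * p := by
              rw [update_succ_prod]; ring
            rw [heq]
            exact hmem
          · -- generator δ = 1 - φ̃⁻¹
            have hAc : (Finset.univ \ A).Nonempty := by
              rw [← Finset.card_pos, Finset.card_sdiff_of_subset (Finset.subset_univ A),
                Finset.card_univ, Fintype.card_fin]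
              omega
            obtain ⟨l0, hl0'⟩ := hAc
            have hl0 : l0 ∉ A := (Finset.mem_sdiff.1 hl0').2
            obtain ⟨ρ, hρ⟩ := nuL_split σ l0
            have hcards : (Nat.card I : MonoidAlgebra ℤ G)
                = (∏ l ∈ Finset.univ.erase l0,
                    (Nat.card (Subgroup.zpowers (σ l)) : MonoidAlgebra ℤ G))
                  * (nuL σ l0 + tauL σ l0 * ρ) := by
              have h1 : (Nat.card I : MonoidAlgebra ℤ G)
                  = ∏ l, (Nat.card (Subgroup.zpowers (σ l)) : MonoidAlgebra ℤ G) := by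
                rw [card_prod hdec]
                push_cast
                rfl
              rw [h1, ← Finset.mul_prod_erase Finset.univ _ (Finset.mem_univ l0), hρ]
              ring
            have hδg : (1 : MonoidAlgebra ℤ G) - MonoidAlgebra.of ℤ G φt⁻¹
                = gtE I φt - (Nat.card I : MonoidAlgebra ℤ G) := by
              rw [gtE]; ring
            have hins : ∏ l ∈ insert l0 A, nuL σ l = nuL σ l0 * ∏ l ∈ A, nuL σ l :=
              Finset.prod_insert hl0
            have M1 := IH A (c0 + 1) m (by omega) (by omega) p hp
            have M2 := IH (insert l0 A) c0 m hc0
              (by rw [Finset.card_insert_of_notMem hl0]; omega) p hp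
            have M3 := IH A c0 (Function.update m l0 (m l0 + 1)) hc0
              (by rw [update_succ_sum]; omega) p hp
            have heq : (∏ l ∈ A, nuL σ l) * (gtE I φt) ^ c0 * (∏ l, tauL σ l ^ m l)
                  * (p * ((1 : MonoidAlgebra ℤ G) - MonoidAlgebra.of ℤ G φt⁻¹))
                = (∏ l ∈ A, nuL σ l) * (gtE I φt) ^ (c0 + 1) * (∏ l, tauL σ l ^ m l) * p
                  - ((∏ l ∈ Finset.univ.erase l0,
                        (Nat.card (Subgroup.zpowers (σ l)) : MonoidAlgebra ℤ G))
                      * ((∏ l ∈ insert l0 A, nuL σ l) * (gtE I φt) ^ c0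
                          * (∏ l, tauL σ l ^ m l) * p)
                    + ((∏ l ∈ Finset.univ.erase l0,
                        (Nat.card (Subgroup.zpowers (σ l)) : MonoidAlgebra ℤ G)) * ρ)
                      * ((∏ l ∈ A, nuL σ l) * (gtE I φt) ^ c0
                          * (∏ l, tauL σ l ^ (Function.update m l0 (m l0 + 1) l)) * p)) := by
              rw [hδg, hcards, hins, update_succ_prod]
              ring
            rw [heq]
            exact sub_mem M1 (add_mem (Ideal.mul_mem_left _ _ M2) (Ideal.mul_mem_left _ _ M3))
        · -- zero
          rw [mul_zero, mul_zero]
          exact zero_mem _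
        · -- add
          intro a b _ _ ha hb
          have heq : (∏ l ∈ A, nuL σ l) * (gtE I φt) ^ c0 * (∏ l, tauL σ l ^ m l) * (p * (a + b))
              = (∏ l ∈ A, nuL σ l) * (gtE I φt) ^ c0 * (∏ l, tauL σ l ^ m l) * (p * a)
                + (∏ l ∈ A, nuL σ l) * (gtE I φt) ^ c0 * (∏ l, tauL σ l ^ m l) * (p * b) := by
            ring
          rw [heq]
          exact add_mem ha hb
        · -- smul
          intro a w _ hw
          have heq : (∏ l ∈ A, nuL σ l) * (gtE I φt) ^ c0 * (∏ l, tauL σ l ^ m l) * (p * (a • w))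
              = a * ((∏ l ∈ A, nuL σ l) * (gtE I φt) ^ c0 * (∏ l, tauL σ l ^ m l) * (p * w)) := by
            rw [smul_eq_mul]; ring
          rw [heq]
          exact Ideal.mul_mem_left _ _ hw
      · intro a b ha hb
        have heq : (∏ l ∈ A, nuL σ l) * (gtE I φt) ^ c0 * (∏ l, tauL σ l ^ m l) * (a + b)
            = (∏ l ∈ A, nuL σ l) * (gtE I φt) ^ c0 * (∏ l, tauL σ l ^ m l) * a
              + (∏ l ∈ A, nuL σ l) * (gtE I φt) ^ c0 * (∏ l, tauL σ l ^ m l) * b := by ring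
        rw [heq]
        exact add_mem ha hb
end Part11
-- ============ Part 12: generation of kerIdeal D, g̃𝓙 ⊆ F ============
section Part12
variable {G : Type} [CommGroup G] [Fintype G]

lemma KD_le_span {I D : Subgroup G} {s : ℕ} {σ : Fin s → G} {φt : G}
    (hdec : IsDecomp I σ) (hID : I ≤ D) (hφt : φt ∈ D)
    (hφgen : ∀ d ∈ D, ∃ n : ℤ, φt ^ n * d⁻¹ ∈ I) :
    kerIdeal D ≤ Ideal.span
      {x | (∃ l, x = tauL σ l) ∨ x = 1 - MonoidAlgebra.of ℤ G φt⁻¹} := by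
  apply ker_le_of_le_augSG
  intro d hd
  set J := Ideal.span
    {x : MonoidAlgebra ℤ G | (∃ l, x = tauL σ l) ∨ x = 1 - MonoidAlgebra.of ℤ G φt⁻¹} with hJ
  have hτJ : ∀ l, MonoidAlgebra.of ℤ G (σ l) - 1 ∈ J :=
    fun l => Ideal.subset_span (Or.inl ⟨l, rfl⟩)
  have hδJ : (1 : MonoidAlgebra ℤ G) - MonoidAlgebra.of ℤ G φt⁻¹ ∈ J :=
    Ideal.subset_span (Or.inr rfl)
  have hφmem : φt ∈ augSG J := by
    show MonoidAlgebra.of ℤ G φt - 1 ∈ J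
    have heq : MonoidAlgebra.of ℤ G φt - 1
        = MonoidAlgebra.of ℤ G φt * ((1 : MonoidAlgebra ℤ G) - MonoidAlgebra.of ℤ G φt⁻¹) := by
      rw [mul_sub, mul_one, ← map_mul, mul_inv_cancel]
      simp [MonoidAlgebra.one_def]
    rw [heq]
    exact Ideal.mul_mem_left _ _ hδJ
  obtain ⟨z, hz⟩ := hφgen d hd
  have hwau : φt ^ z * d⁻¹ ∈ augSG J := I_le_augSG hdec hτJ hz
  have hdw : d = (φt ^ z * d⁻¹)⁻¹ * φt ^ z := by group
  rw [hdw]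
  exact mul_mem (inv_mem hwau) (zpow_mem hφmem z)

lemma sum_ideal_le {R : Type} [CommRing R] {ι : Type} (t : Finset ι) (f : ι → Ideal R)
    (P : Ideal R) (h : ∀ i ∈ t, f i ≤ P) : (∑ i ∈ t, f i) ≤ P := by
  classical
  induction t using Finset.induction_on with
  | empty => simp
  | insert _ _ hx ih =>
      rename_i a t'
      rw [Finset.sum_insert hx, Submodule.add_eq_sup, sup_le_iff]
      exact ⟨h a (Finset.mem_insert_self _ _),
        ih (fun i hi => h i (Finset.mem_insert_of_mem hi))⟩

/-- the ideal of `y` with `g̃ y ∈ F` -/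
noncomputable def colonF (I : Subgroup G) {s : ℕ} (σ : Fin s → G) (φt : G) :
    Ideal (MonoidAlgebra ℤ G) where
  carrier := {y | gtE I φt * y ∈ fittMat (bigMat I σ φt) 0}
  add_mem' := by
    intro a b ha hb
    show gtE I φt * (a + b) ∈ fittMat (bigMat I σ φt) 0
    rw [mul_add]
    exact add_mem (ha : gtE I φt * a ∈ fittMat (bigMat I σ φt) 0) (hb : gtE I φt * b ∈ fittMat (bigMat I σ φt) 0)
  zero_mem' := by
    show gtE I φt * 0 ∈ fittMat (bigMat I σ φt) 0
    rw [mul_zero]; exact zero_mem _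
  smul_mem' := by
    intro c x hx
    show gtE I φt * (c • x) ∈ fittMat (bigMat I σ φt) 0
    rw [smul_eq_mul, mul_left_comm]
    exact Ideal.mul_mem_left _ _ (hx : gtE I φt * x ∈ fittMat (bigMat I σ φt) 0)

lemma J_le_colonF {I D : Subgroup G} {s : ℕ} {σ : Fin s → G} {φt : G}
    (hdec : IsDecomp I σ) (hID : I ≤ D) (hφt : φt ∈ D)
    (hφgen : ∀ d ∈ D, ∃ n : ℤ, φt ^ n * d⁻¹ ∈ I) :
    Jideal D σ ≤ colonF I σ φt := by
  have hgen := KD_le_span hdec hID hφt hφgen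
  refine sum_ideal_le _ _ _ (fun i hi => ?_)
  rw [Ideal.mul_le]
  intro z hz w hw
  refine Submodule.span_induction ?_ ?_ ?_ ?_ hz
  · rintro x ⟨T, hT, rfl⟩
    show gtE I φt * ((∏ l ∈ T, nuL σ l) * w) ∈ fittMat (bigMat I σ φt) 0
    have hmem := Kid hdec hgen i T 1 (fun _ => 0) le_rfl
      (by
        rw [hT]
        have := Finset.mem_range.1 hi
        simp only [Finset.sum_const, smul_eq_mul, mul_zero, pow_zero]
        omega) w hw
    have heq : gtE I φt * ((∏ l ∈ T, nuL σ l) * w)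
        = (∏ l ∈ T, nuL σ l) * (gtE I φt) ^ 1 * (∏ _l : Fin s, tauL σ _l ^ 0) * w := by
      simp only [pow_one, pow_zero, Finset.prod_const_one]
      ring
    rw [heq]
    exact hmem
  · show gtE I φt * (0 * w) ∈ fittMat (bigMat I σ φt) 0
    rw [zero_mul, mul_zero]; exact zero_mem _
  · intro a b _ _ ha hb
    show gtE I φt * ((a + b) * w) ∈ fittMat (bigMat I σ φt) 0
    have heq : gtE I φt * ((a + b) * w) = gtE I φt * (a * w) + gtE I φt * (b * w) := by ring
    rw [heq]
    exact add_mem (ha : gtE I φt * (a * w) ∈ fittMat (bigMat I σ φt) 0) (hb : gtE I φt * (b * w) ∈ fittMat (bigMat I σ φt) 0)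
  · intro c x _ hx
    show gtE I φt * ((c • x) * w) ∈ fittMat (bigMat I σ φt) 0
    have heq : gtE I φt * ((c • x) * w) = c * (gtE I φt * (x * w)) := by
      rw [smul_eq_mul]; ring
    rw [heq]
    exact Ideal.mul_mem_left _ _ (hx : gtE I φt * (x * w) ∈ fittMat (bigMat I σ φt) 0)
end Part12

/-- with `F` the initial Fitting ideal of `𝓘_I/g̃𝓘_I`, i.e. the ideal
generated by the `s × s` minors of the presentation matrix of `𝓘_I/g̃𝓘_I` obtained from
`M_s(ν_1, …, ν_s, τ_1, …, τ_s)` by appending the `s` rows `g̃·e_l`, one has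
`(#I − ν_I φ̃⁻¹ + #I ν_I) · F = g̃ · (#I ν_I ℤ[G] + (#I − ν_I φ̃⁻¹) 𝓙)`.
(This is `h·SFitt¹(A) = (ν_I, (1 − (ν_I/#I)φ⁻¹)𝓙)` with denominators cleared.) -/
theorem statement0 {G : Type} [CommGroup G] [Fintype G] (I D : Subgroup G) (hID : I ≤ D)
    {s : ℕ} (σ : Fin s → G) (hdec : IsDecomp I σ)
    (φt : G) (hφt : φt ∈ D) (hφgen : ∀ d ∈ D, ∃ n : ℤ, φt ^ n * d⁻¹ ∈ I) :
    Ideal.span {(Nat.card I : MonoidAlgebra ℤ G)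
          - nuElt ℤ I * MonoidAlgebra.of ℤ G φt⁻¹
          + (Nat.card I : MonoidAlgebra ℤ G) * nuElt ℤ I} *
      fittMat (Sum.elim
        (Mmat (fun l => nuElt ℤ (Subgroup.zpowers (σ l)))
          (fun l => MonoidAlgebra.of ℤ G (σ l) - 1))
        (fun l l' => if l' = l then
            1 - MonoidAlgebra.of ℤ G φt⁻¹ + (Nat.card I : MonoidAlgebra ℤ G)
          else 0)) 0
    = Ideal.span {1 - MonoidAlgebra.of ℤ G φt⁻¹ + (Nat.card I : MonoidAlgebra ℤ G)} *
      (Ideal.span {(Nat.card I : MonoidAlgebra ℤ G) * nuElt ℤ I} +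
        Ideal.span {(Nat.card I : MonoidAlgebra ℤ G)
            - nuElt ℤ I * MonoidAlgebra.of ℤ G φt⁻¹} *
          ∑ i ∈ Finset.range s, Zideal σ (i + 1) * (kerIdeal D) ^ i) := by
  classical
  show Ideal.span {hnElt I φt} * fittMat (bigMat I σ φt) 0 = RHSideal I D σ φt
  have hsq : nuElt ℤ I * nuElt ℤ I
      = (Nat.card I : MonoidAlgebra ℤ G) * nuElt ℤ I := nuI_sq I
  refine le_antisymm ?_ ?_
  · -- LHS ≤ RHS
    rw [Ideal.mul_le]
    intro r hr a ha
    obtain ⟨b, hb⟩ := Ideal.mem_span_singleton'.1 hr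
    suffices h : hnElt I φt * a ∈ RHSideal I D σ φt by
      rw [← hb, show b * hnElt I φt * a = b * (hnElt I φt * a) by ring]
      exact Ideal.mul_mem_left _ _ h
    refine Submodule.span_induction ?_ ?_ ?_ ?_ ha
    · intro x hx
      obtain ⟨r', c', rfl⟩ := fitt_elt_eq _ hx
      exact minor_mem hdec hID hφt r' c'
    · rw [mul_zero]; exact zero_mem _
    · intro x y _ _ hx hy
      rw [mul_add]; exact add_mem hx hy
    · intro c x _ hx
      rw [smul_eq_mul, show hnElt I φt * (c * x) = c * (hnElt I φt * x) by ring]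
      exact Ideal.mul_mem_left _ _ hx
  · -- RHS ≤ LHS
    rw [RHSideal, Ideal.mul_le]
    intro g hg y hy
    obtain ⟨b, hb⟩ := Ideal.mem_span_singleton'.1 hg
    suffices h : gtE I φt * y ∈ Ideal.span {hnElt I φt} * fittMat (bigMat I σ φt) 0 by
      rw [← hb, show b * gtE I φt * y = b * (gtE I φt * y) by ring]
      exact Ideal.mul_mem_left _ _ h
    rw [Submodule.add_eq_sup, Submodule.mem_sup] at hy
    obtain ⟨y1, hy1, y2, hy2, rfl⟩ := hy
    rw [mul_add]
    refine add_mem ?_ ?_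
    · obtain ⟨b1, hb1⟩ := Ideal.mem_span_singleton'.1 hy1
      have hident : hnElt I φt * nuElt ℤ I
          = gtE I φt * ((Nat.card I : MonoidAlgebra ℤ G) * nuElt ℤ I) := by
        rw [hnElt, gtE]
        linear_combination ((Nat.card I : MonoidAlgebra ℤ G)
          - MonoidAlgebra.of ℤ G φt⁻¹) * hsq
      have heq : gtE I φt * y1 = b1 * (hnElt I φt * nuElt ℤ I) := by
        rw [hident, ← hb1]; ring
      rw [heq]
      exact Ideal.mul_mem_left _ _
        (Ideal.mul_mem_mul (Ideal.mem_span_singleton_self _) (nu_mem_F hdec))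
    · refine Submodule.mul_induction_on hy2 ?_ ?_
      · intro x hx w hw
        obtain ⟨b2, hb2⟩ := Ideal.mem_span_singleton'.1 hx
        have hgw : gtE I φt * w ∈ fittMat (bigMat I σ φt) 0 :=
          J_le_colonF hdec hID hφt hφgen hw
        have hνw : nuElt ℤ I * w ∈ fittMat (bigMat I σ φt) 0 :=
          Ideal.mul_mem_right _ _ (nu_mem_F hdec)
        have hsub : (gtE I φt - nuElt ℤ I) * w ∈ fittMat (bigMat I σ φt) 0 := by
          rw [sub_mul]
          exact sub_mem hgw hνw
        have hqid : ((Nat.card I : MonoidAlgebra ℤ G)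
              - nuElt ℤ I * MonoidAlgebra.of ℤ G φt⁻¹) * gtE I φt
            = hnElt I φt * (gtE I φt - nuElt ℤ I) := by
          rw [hnElt, gtE]
          linear_combination ((Nat.card I : MonoidAlgebra ℤ G)
            - MonoidAlgebra.of ℤ G φt⁻¹) * hsq
        have heq : gtE I φt * (x * w)
            = b2 * (hnElt I φt * ((gtE I φt - nuElt ℤ I) * w)) := by
          rw [← hb2]
          linear_combination (b2 * w) * hqid
        rw [heq]
        exact Ideal.mul_mem_left _ _
          (Ideal.mul_mem_mul (Ideal.mem_span_singleton_self _) hsub)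
      · intro a b ha hb
        rw [mul_add]
        exact add_mem ha hb
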